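/- arXiv:1810.13019 — 4 statements merged into one kernel-verified Lean document; each statement's English description precedes it below -/
import Mathlib

section
/- Fix an initial state k∈K and suppose assumption (H_N) holds. Regard each entry W^k_λ(z)[𝐢,𝐣]=d^k_λ(𝐢,𝐣)−z·d^0_λ(𝐢,𝐣) as a polynomial in the two variables λ and z. Let Ẇ^k_λ(z) be any square sub-matrix of W^k_λ(z), obtained by selecting subsets S⊆I of rows and T⊆J of columns with |S|=|T|≥1, and set P(λ,z) := det(N^n·Ẇ^k_λ(z)). Then P(λ,z) is a polynomial in λ and z with integer coefficients, its degree in λ and its degree in z are each at most |I|·n, and every coefficient of P has bit-size at most f(|I|,n,N) := |I|·n·bit(n)+|I|·n·bit(N)+|I|·bit(|I|)+2·bit(|I|·n+1). -/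
open Filter Set Topology

noncomputable def matVal {α β : Type*} [Fintype α] [Fintype β] (M : α → β → ℝ) : ℝ :=
  ⨆ x : stdSimplex ℝ α, ⨅ y : stdSimplex ℝ β, ∑ a, ∑ b, x.1 a * M a b * y.1 b

def bitsize (p : ℕ) : ℕ := Nat.clog 2 (p + 1)

noncomputable def shapley {n : ℕ} {A B : Fin n → Type*}
    [∀ k, Fintype (A k)] [∀ k, Fintype (B k)]
    (g : (k : Fin n) → A k → B k → ℝ) (q : (k : Fin n) → A k → B k → Fin n → ℝ)
    (lam : ℝ) (u : Fin n → ℝ) : Fin n → ℝ :=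
  fun l => matVal (fun (i : A l) (j : B l) =>
    lam * g l i j + (1 - lam) * ∑ l', q l i j l' * u l')

noncomputable def dZero {n : ℕ} {A B : Fin n → Type*}
    (q : (k : Fin n) → A k → B k → Fin n → ℝ)
    (ii : (k : Fin n) → A k) (jj : (k : Fin n) → B k) (lam : ℝ) : ℝ :=
  Matrix.det (1 - (1 - lam) • Matrix.of (fun l l' => q l (ii l) (jj l) l'))

noncomputable def dK {n : ℕ} {A B : Fin n → Type*}
    (g : (k : Fin n) → A k → B k → ℝ) (q : (k : Fin n) → A k → B k → Fin n → ℝ)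
    (k : Fin n) (ii : (k : Fin n) → A k) (jj : (k : Fin n) → B k) (lam : ℝ) : ℝ :=
  Matrix.det (Matrix.updateCol
    (1 - (1 - lam) • Matrix.of (fun l l' => q l (ii l) (jj l) l')) k
    (fun l => g l (ii l) (jj l)))

noncomputable def Wmat {n : ℕ} {A B : Fin n → Type*}
    (g : (k : Fin n) → A k → B k → ℝ) (q : (k : Fin n) → A k → B k → Fin n → ℝ)
    (k : Fin n) (lam z : ℝ) :
    ((k : Fin n) → A k) → ((k : Fin n) → B k) → ℝ :=
  fun ii jj => dK g q k ii jj lam - z * dZero q ii jj lam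

/-- The entry W^k(λ,z)[𝐢,𝐣] = d^k_λ(𝐢,𝐣) − z·d^0_λ(𝐢,𝐣) viewed as a bivariate polynomial:
an element of (ℝ[λ])[z], the outer variable being z and the inner one λ. -/
noncomputable def WmatPoly {n : ℕ} {A B : Fin n → Type*}
    (g : (k : Fin n) → A k → B k → ℝ) (q : (k : Fin n) → A k → B k → Fin n → ℝ)
    (k : Fin n) (ii : (k : Fin n) → A k) (jj : (k : Fin n) → B k) :
    Polynomial (Polynomial ℝ) :=
  Polynomial.C (Matrix.det (Matrix.updateCol
      ((1 : Matrix (Fin n) (Fin n) (Polynomial ℝ))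
        - ((1 - Polynomial.X : Polynomial ℝ)) • Matrix.of (fun l l' => Polynomial.C (q l (ii l) (jj l) l')))
      k (fun l => Polynomial.C (g l (ii l) (jj l)))))
  - Polynomial.X * Polynomial.C (Matrix.det
      ((1 : Matrix (Fin n) (Fin n) (Polynomial ℝ))
        - ((1 - Polynomial.X : Polynomial ℝ)) • Matrix.of (fun l l' => Polynomial.C (q l (ii l) (jj l) l'))))

namespace S6
open Polynomial

noncomputable def l1 (p : Polynomial ℤ) : ℤ := ∑ i ∈ p.support, |p.coeff i|

lemma l1_nonneg (p : Polynomial ℤ) : 0 ≤ l1 p :=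
  Finset.sum_nonneg fun _ _ => abs_nonneg _

lemma abs_coeff_le_l1 (p : Polynomial ℤ) (i : ℕ) : |p.coeff i| ≤ l1 p := by
  by_cases h : i ∈ p.support
  · exact Finset.single_le_sum (f := fun j => |p.coeff j|) (fun _ _ => abs_nonneg _) h
  · rw [Polynomial.notMem_support_iff.mp h]
    simpa using l1_nonneg p

lemma l1_eq_range {p : Polynomial ℤ} {m : ℕ} (h : p.natDegree < m) :
    l1 p = ∑ i ∈ Finset.range m, |p.coeff i| := by
  refine Finset.sum_subset ?_ ?_
  · exact (Polynomial.supp_subset_range h)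
  · intro x _ hx
    rw [Polynomial.notMem_support_iff.mp hx, abs_zero]

lemma l1_add_le (p q : Polynomial ℤ) : l1 (p + q) ≤ l1 p + l1 q := by
  set m := max (p + q).natDegree (max p.natDegree q.natDegree) + 1 with hm
  have h1 : (p+q).natDegree < m := Nat.lt_succ_of_le (le_max_left _ _)
  have h2 : p.natDegree < m := Nat.lt_succ_of_le (le_trans (le_max_left _ _) (le_max_right _ _))
  have h3 : q.natDegree < m := Nat.lt_succ_of_le (le_trans (le_max_right _ _) (le_max_right _ _))
  rw [l1_eq_range h1, l1_eq_range h2, l1_eq_range h3, ← Finset.sum_add_distrib]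
  refine Finset.sum_le_sum fun i _ => ?_
  rw [Polynomial.coeff_add]
  exact abs_add_le _ _

lemma l1_neg (p : Polynomial ℤ) : l1 (-p) = l1 p := by
  unfold l1
  rw [Polynomial.support_neg]
  exact Finset.sum_congr rfl fun i _ => by simp

lemma l1_C (a : ℤ) : l1 (C a) = |a| := by
  by_cases h : a = 0
  · simp [h, l1]
  · unfold l1
    rw [Polynomial.support_C h]
    simp

lemma l1_X_mul (p : Polynomial ℤ) : l1 (X * p) = l1 p := by
  have h1 : (X * p).natDegree < p.natDegree + 2 := by
    have := Polynomial.natDegree_mul_le (p := (X : Polynomial ℤ)) (q := p)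
    have hx : (X : Polynomial ℤ).natDegree ≤ 1 := Polynomial.natDegree_X_le
    omega
  rw [l1_eq_range h1, Finset.sum_range_succ', l1_eq_range (Nat.lt_succ_self p.natDegree)]
  simp [Polynomial.coeff_X_mul, Polynomial.mul_coeff_zero]

lemma l1_X_pow_mul (p : Polynomial ℤ) (n : ℕ) : l1 (X ^ n * p) = l1 p := by
  induction n with
  | zero => simp
  | succ n ih => rw [pow_succ, mul_comm (X^n) X, mul_assoc, l1_X_mul, ih]

lemma l1_C_mul_le (a : ℤ) (p : Polynomial ℤ) : l1 (C a * p) ≤ |a| * l1 p := by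
  have hsub : (C a * p).support ⊆ p.support := by
    rw [← smul_eq_C_mul]
    exact Polynomial.support_smul a p
  calc l1 (C a * p) = ∑ i ∈ (C a * p).support, |a * p.coeff i| := by
        unfold l1; exact Finset.sum_congr rfl fun i _ => by rw [Polynomial.coeff_C_mul]
    _ ≤ ∑ i ∈ p.support, |a * p.coeff i| :=
        Finset.sum_le_sum_of_subset_of_nonneg hsub fun _ _ _ => abs_nonneg _
    _ = |a| * l1 p := by rw [l1, Finset.mul_sum]; exact Finset.sum_congr rfl fun i _ => abs_mul _ _

lemma l1_sum_le {α : Type*} (s : Finset α) (f : α → Polynomial ℤ) :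
    l1 (∑ i ∈ s, f i) ≤ ∑ i ∈ s, l1 (f i) := by
  classical
  induction s using Finset.cons_induction with
  | empty => simp [l1]
  | cons a s ha ih =>
    rw [Finset.sum_cons, Finset.sum_cons]
    exact le_trans (l1_add_le _ _) (by linarith)

lemma l1_monomial_mul_le (n : ℕ) (a : ℤ) (p : Polynomial ℤ) :
    l1 (monomial n a * p) ≤ |a| * l1 p := by
  rw [← Polynomial.C_mul_X_pow_eq_monomial, mul_assoc]
  calc l1 (C a * (X ^ n * p)) ≤ |a| * l1 (X ^ n * p) := l1_C_mul_le _ _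
    _ = |a| * l1 p := by rw [l1_X_pow_mul]

lemma l1_mul_le (p q : Polynomial ℤ) : l1 (p * q) ≤ l1 p * l1 q := by
  conv_lhs => rw [p.as_sum_support]
  rw [Finset.sum_mul]
  calc l1 (∑ i ∈ p.support, monomial i (p.coeff i) * q)
      ≤ ∑ i ∈ p.support, l1 (monomial i (p.coeff i) * q) := l1_sum_le _ _
    _ ≤ ∑ i ∈ p.support, |p.coeff i| * l1 q :=
        Finset.sum_le_sum fun i _ => l1_monomial_mul_le _ _ _
    _ = l1 p * l1 q := (Finset.sum_mul _ _ _).symm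


lemma l1_prod_le {α : Type*} (s : Finset α) (f : α → Polynomial ℤ) :
    l1 (∏ i ∈ s, f i) ≤ ∏ i ∈ s, l1 (f i) := by
  classical
  induction s using Finset.cons_induction with
  | empty =>
      simp only [Finset.prod_empty]
      rw [← Polynomial.C_1, l1_C]
      norm_num
  | cons a s ha ih =>
    rw [Finset.prod_cons, Finset.prod_cons]
    calc l1 (f a * ∏ i ∈ s, f i) ≤ l1 (f a) * l1 (∏ i ∈ s, f i) := l1_mul_le _ _
      _ ≤ l1 (f a) * ∏ i ∈ s, l1 (f i) := by
          exact mul_le_mul_of_nonneg_left ih (l1_nonneg _)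

lemma l1_det_le {m : Type*} [Fintype m] [DecidableEq m] (M : Matrix m m (Polynomial ℤ))
    (c : ℤ) (h : ∀ i j, l1 (M i j) ≤ c) :
    l1 M.det ≤ (Fintype.card m).factorial * c ^ (Fintype.card m) := by
  rw [Matrix.det_apply]
  calc l1 (∑ σ : Equiv.Perm m, Equiv.Perm.sign σ • ∏ i, M (σ i) i)
      ≤ ∑ σ : Equiv.Perm m, l1 (Equiv.Perm.sign σ • ∏ i, M (σ i) i) := l1_sum_le _ _
    _ ≤ ∑ _σ : Equiv.Perm m, c ^ (Fintype.card m) := by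
        refine Finset.sum_le_sum fun σ _ => ?_
        have hs : l1 (Equiv.Perm.sign σ • ∏ i, M (σ i) i) = l1 (∏ i, M (σ i) i) := by
          rcases Int.units_eq_one_or (Equiv.Perm.sign σ) with hh | hh <;>
            simp [hh, Units.smul_def, l1_neg]
        rw [hs]
        calc l1 (∏ i, M (σ i) i) ≤ ∏ i, l1 (M (σ i) i) := l1_prod_le _ _
          _ ≤ ∏ _i : m, c := Finset.prod_le_prod (fun _ _ => l1_nonneg _) (fun i _ => h _ _)
          _ = c ^ (Fintype.card m) := by rw [Finset.prod_const, Finset.card_univ]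
    _ = (Fintype.card m).factorial * c ^ (Fintype.card m) := by
        rw [Finset.sum_const, Finset.card_univ, Fintype.card_perm, nsmul_eq_mul]



-- generic natDegree det bound
lemma natDegree_det_le {m : Type*} [Fintype m] [DecidableEq m] {R : Type*} [CommRing R]
    (M : Matrix m m (Polynomial R)) (d : ℕ) (h : ∀ i j, (M i j).natDegree ≤ d) :
    M.det.natDegree ≤ Fintype.card m * d := by
  rw [Matrix.det_apply]
  refine Polynomial.natDegree_sum_le_of_forall_le _ _ fun σ _ => ?_
  have hs : (Equiv.Perm.sign σ • ∏ i, M (σ i) i).natDegree = (∏ i, M (σ i) i).natDegree := by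
    rcases Int.units_eq_one_or (Equiv.Perm.sign σ) with hh | hh <;>
      simp [hh, Units.smul_def, Polynomial.natDegree_neg]
  rw [hs]
  refine le_trans (Polynomial.natDegree_prod_le _ _) ?_
  calc ∑ i, (M (σ i) i).natDegree ≤ ∑ _i : m, d := Finset.sum_le_sum fun i _ => h _ _
    _ = Fintype.card m * d := by rw [Finset.sum_const, Finset.card_univ, smul_eq_mul]

-- predicate: all coefficients (in outer var) have inner natDegree ≤ d
def CD (d : ℕ) (p : Polynomial (Polynomial ℤ)) : Prop := ∀ i, (p.coeff i).natDegree ≤ d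

lemma CD_mul {a b : ℕ} {p q : Polynomial (Polynomial ℤ)} (hp : CD a p) (hq : CD b q) :
    CD (a + b) (p * q) := by
  intro i
  rw [Polynomial.coeff_mul]
  refine Polynomial.natDegree_sum_le_of_forall_le _ _ fun x _ => ?_
  exact le_trans (Polynomial.natDegree_mul_le) (add_le_add (hp x.1) (hq x.2))

lemma CD_prod {α : Type*} (s : Finset α) (f : α → Polynomial (Polynomial ℤ)) (d : ℕ)
    (h : ∀ i ∈ s, CD d (f i)) : CD (s.card * d) (∏ i ∈ s, f i) := by
  classical
  induction s using Finset.cons_induction with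
  | empty => intro i; simp only [Finset.prod_empty]
             by_cases hi : i = 0 <;> simp [hi, Polynomial.coeff_one]
  | cons a s ha ih =>
    rw [Finset.prod_cons, Finset.card_cons, add_mul, one_mul, add_comm]
    exact CD_mul (h a (Finset.mem_cons_self a s)) (ih fun i hi => h i (Finset.mem_cons_of_mem hi))

lemma CD_det {m : Type*} [Fintype m] [DecidableEq m] (M : Matrix m m (Polynomial (Polynomial ℤ)))
    (d : ℕ) (h : ∀ i j, CD d (M i j)) : CD (Fintype.card m * d) M.det := by
  intro i
  rw [Matrix.det_apply, Polynomial.finset_sum_coeff]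
  refine Polynomial.natDegree_sum_le_of_forall_le _ _ fun σ _ => ?_
  have hs : (Equiv.Perm.sign σ • ∏ j, M (σ j) j).coeff i = Equiv.Perm.sign σ • (∏ j, M (σ j) j).coeff i := by
    rcases Int.units_eq_one_or (Equiv.Perm.sign σ) with hh | hh <;> simp [hh, Units.smul_def]
  rw [hs]
  have h2 : (Equiv.Perm.sign σ • (∏ j, M (σ j) j).coeff i).natDegree = ((∏ j, M (σ j) j).coeff i).natDegree := by
    rcases Int.units_eq_one_or (Equiv.Perm.sign σ) with hh | hh <;>
      simp [hh, Units.smul_def, Polynomial.natDegree_neg]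
  rw [h2]
  have := CD_prod Finset.univ (fun j => M (σ j) j) d (fun j _ => h _ _)
  rw [Finset.card_univ] at this
  exact this i

-- coefficient extraction through substitution z := X^D
lemma coeff_eval_X_pow (p : Polynomial (Polynomial ℤ)) (D : ℕ)
    (hD : ∀ i', (p.coeff i').natDegree < D) (i j : ℕ) (hj : j < D) :
    (p.eval ((X : Polynomial ℤ) ^ D)).coeff (i * D + j) = (p.coeff i).coeff j := by
  rw [Polynomial.eval_eq_sum_range]
  rw [Polynomial.finset_sum_coeff]
  have key : ∀ i' : ℕ, (p.coeff i' * ((X : Polynomial ℤ) ^ D) ^ i').coeff (i * D + j)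
      = if i' = i then (p.coeff i).coeff j else 0 := by
    intro i'
    rw [← pow_mul, Polynomial.coeff_mul_X_pow']
    rcases lt_trichotomy i' i with hlt | heq | hgt
    · have h1 : D * i' ≤ i * D := by rw [mul_comm i D]; exact Nat.mul_le_mul_left _ hlt.le
      have h2 : D * i' + D ≤ i * D := by
        rw [mul_comm i D, ← Nat.mul_succ]; exact Nat.mul_le_mul_left _ hlt
      rw [if_pos (by omega), if_neg (by omega)]
      apply Polynomial.coeff_eq_zero_of_natDegree_lt
      exact lt_of_lt_of_le (hD i') (by omega)
    · subst heq
      have h1 : D * i' = i' * D := mul_comm _ _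
      rw [if_pos (by omega), if_pos rfl]
      congr 1
      omega
    · have h2 : i * D + D ≤ D * i' := by
        rw [mul_comm D i', ← Nat.succ_mul]; exact Nat.mul_le_mul_right _ hgt
      rw [if_neg (by omega), if_neg (by omega)]
  by_cases hi : i ∈ Finset.range (p.natDegree + 1)
  · rw [Finset.sum_eq_single i (fun b _ hb => by rw [key b, if_neg hb]) (fun h => absurd hi h)]
    rw [key i, if_pos rfl]
  · have h0 : p.coeff i = 0 := by
      apply Polynomial.coeff_eq_zero_of_natDegree_lt
      simpa using hi
    rw [h0, Polynomial.coeff_zero]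
    apply Finset.sum_eq_zero
    intro b hb
    rw [key b, if_neg]
    intro hbi; subst hbi; exact hi hb





lemma aux_pow (a m : ℕ) : a ^ (m+1) + (m+1) * a ^ m ≤ (a+1) ^ (m+1) := by
  induction m with
  | zero => simp
  | succ m ih =>
    have h : (a+1) ^ (m+2) = (a+1) * (a+1) ^ (m+1) := by ring
    rw [h]
    calc a ^ (m+2) + (m+2) * a ^ (m+1)
        ≤ (a+1) * (a ^ (m+1) + (m+1) * a ^ m) := by
          have expand : (a+1) * (a ^ (m+1) + (m+1) * a ^ m)
              = a ^ (m+2) + (m+2) * a ^ (m+1) + (m+1) * a ^ m := by ring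
          rw [expand]
          exact Nat.le_add_right _ _
      _ ≤ (a+1) * (a+1) ^ (m+1) := Nat.mul_le_mul_left _ ih

lemma fact_two_pow (m : ℕ) : m.factorial * 2 ^ m ≤ (m+1) ^ m := by
  induction m with
  | zero => simp
  | succ m ih =>
    have key := aux_pow (m+1) m
    have h2 : 2 * (m+1)^(m+1) ≤ (m+2)^(m+1) := by
      calc 2 * (m+1)^(m+1) = (m+1)^(m+1) + (m+1) * (m+1)^m := by ring
        _ ≤ (m+2)^(m+1) := key
    calc (m+1).factorial * 2 ^ (m+1) = (m+1) * 2 * (m.factorial * 2 ^ m) := by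
          rw [Nat.factorial_succ]; ring
      _ ≤ (m+1) * 2 * (m+1)^m := Nat.mul_le_mul_left _ ih
      _ = 2 * (m+1)^(m+1) := by ring
      _ ≤ (m+2)^(m+1) := h2

lemma le_two_pow__root_.bitsize (p : ℕ) : p + 1 ≤ 2 ^ _root_.bitsize p := Nat.le_pow_clog one_lt_two _

lemma final_chain (s' s n N : ℕ) (hn : 1 ≤ n) (hN : 1 ≤ N) (hs' : s' ≤ s) (hs : 1 ≤ s) :
    s'.factorial * (2 * n.factorial * (2*N)^n) ^ s' ≤
      2 ^ (s * n * _root_.bitsize n + s * n * _root_.bitsize N + s * _root_.bitsize s + 2 * _root_.bitsize (s*n+1)) - 1 := by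
  have hbase : 1 ≤ 2 * n.factorial * (2*N)^n := by
    have : 0 < 2 * n.factorial * (2*N)^n := by positivity
    omega
  have step1 : s'.factorial * (2 * n.factorial * (2*N)^n) ^ s' ≤
      s.factorial * (2 * n.factorial * (2*N)^n) ^ s :=
    Nat.mul_le_mul (Nat.factorial_le hs') (Nat.pow_le_pow_right hbase hs')
  have expand : s.factorial * (2 * n.factorial * (2*N)^n) ^ s
      = (s.factorial * 2 ^ s) * ((n.factorial * 2 ^ n) ^ s * (N ^ n) ^ s) := by
    rw [mul_pow, mul_pow, mul_pow]; ring
  have h1 : s.factorial * 2 ^ s ≤ 2 ^ (s * _root_.bitsize s) := by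
    calc s.factorial * 2 ^ s ≤ (s+1) ^ s := fact_two_pow s
      _ ≤ (2 ^ _root_.bitsize s) ^ s := Nat.pow_le_pow_left (le_two_pow__root_.bitsize s) s
      _ = 2 ^ (_root_.bitsize s * s) := by rw [← pow_mul]
      _ = 2 ^ (s * _root_.bitsize s) := by rw [mul_comm]
  have h2 : (n.factorial * 2 ^ n) ^ s ≤ 2 ^ (s * n * _root_.bitsize n) := by
    calc (n.factorial * 2 ^ n) ^ s ≤ ((n+1) ^ n) ^ s :=
          Nat.pow_le_pow_left (fact_two_pow n) s
      _ ≤ ((2 ^ _root_.bitsize n) ^ n) ^ s :=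
          Nat.pow_le_pow_left (Nat.pow_le_pow_left (le_two_pow__root_.bitsize n) n) s
      _ = 2 ^ (s * n * _root_.bitsize n) := by rw [← pow_mul, ← pow_mul]; ring_nf
  have h3 : (N ^ n) ^ s ≤ 2 ^ (s * n * _root_.bitsize N) := by
    have hNle : N ≤ 2 ^ _root_.bitsize N := le_trans (Nat.le_succ N) (le_two_pow__root_.bitsize N)
    calc (N ^ n) ^ s ≤ ((2 ^ _root_.bitsize N) ^ n) ^ s :=
          Nat.pow_le_pow_left (Nat.pow_le_pow_left hNle n) s
      _ = 2 ^ (s * n * _root_.bitsize N) := by rw [← pow_mul, ← pow_mul]; ring_nf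
  have total : s.factorial * (2 * n.factorial * (2*N)^n) ^ s ≤
      2 ^ (s * n * _root_.bitsize n + s * n * _root_.bitsize N + s * _root_.bitsize s) := by
    rw [expand]
    calc (s.factorial * 2 ^ s) * ((n.factorial * 2 ^ n) ^ s * (N ^ n) ^ s)
        ≤ 2 ^ (s * _root_.bitsize s) * (2 ^ (s * n * _root_.bitsize n) * 2 ^ (s * n * _root_.bitsize N)) :=
          Nat.mul_le_mul h1 (Nat.mul_le_mul h2 h3)
      _ = 2 ^ (s * n * _root_.bitsize n + s * n * _root_.bitsize N + s * _root_.bitsize s) := by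
          rw [← pow_add, ← pow_add]; ring_nf
  have hbit : 1 ≤ _root_.bitsize (s*n+1) := Nat.clog_pos one_lt_two (by nlinarith)
  have hfinal : 2 ^ (s * n * _root_.bitsize n + s * n * _root_.bitsize N + s * _root_.bitsize s) ≤
      2 ^ (s * n * _root_.bitsize n + s * n * _root_.bitsize N + s * _root_.bitsize s + 2 * _root_.bitsize (s*n+1)) - 1 := by
    set a := s * n * _root_.bitsize n + s * n * _root_.bitsize N + s * _root_.bitsize s
    have : 2 ^ a + 1 ≤ 2 ^ (a + 2 * _root_.bitsize (s*n+1)) := by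
      calc 2 ^ a + 1 ≤ 2 ^ a + 2 ^ a := by
            have := Nat.one_le_two_pow (n := a); omega
        _ = 2 ^ (a + 1) := by ring
        _ ≤ 2 ^ (a + 2 * _root_.bitsize (s*n+1)) := Nat.pow_le_pow_right (by norm_num) (by omega)
    omega
  exact le_trans step1 (le_trans total hfinal)



lemma l1_sub_le (p q : Polynomial ℤ) : l1 (p - q) ≤ l1 p + l1 q := by
  rw [sub_eq_add_neg]
  exact le_trans (l1_add_le _ _) (by rw [l1_neg])

lemma CD_entry {d : ℕ} {a b : Polynomial ℤ} (ha : a.natDegree ≤ d) (hb : b.natDegree ≤ d) :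
    CD d (Polynomial.C a - Polynomial.X * Polynomial.C b) := by
  intro i
  match i with
  | 0 =>
    simpa [Polynomial.coeff_sub, Polynomial.mul_coeff_zero] using ha
  | 1 =>
    simp only [Polynomial.coeff_sub, Polynomial.coeff_X_mul, Polynomial.coeff_C]
    simpa [Polynomial.natDegree_neg] using hb
  | (i+2) =>
    simp [Polynomial.coeff_sub, Polynomial.coeff_X_mul, Polynomial.coeff_C]

end S6



set_option maxHeartbeats 1000000
/-- Under (H_N), for any square sub-matrix Ẇ of W^k (rows S ⊆ I, columns T ⊆ J,
|S| = |T| ≥ 1), P(λ,z) := det(N^n·Ẇ) is a polynomial with integer coefficients, of degree at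
most |I|·n in λ and in z, whose coefficients have bit-size at most
f(|I|,n,N) := |I|·n·bit(n)+|I|·n·bit(N)+|I|·bit(|I|)+2·bit(|I|·n+1). -/
theorem stmt6
    {n : ℕ} (hn : 1 ≤ n)
    {A B : Fin n → Type*} [∀ k, Fintype (A k)] [∀ k, Fintype (B k)]
    [∀ k, Nonempty (A k)] [∀ k, Nonempty (B k)]
    [∀ k, DecidableEq (A k)] [∀ k, DecidableEq (B k)]
    (g : (k : Fin n) → A k → B k → ℝ)
    (q : (k : Fin n) → A k → B k → Fin n → ℝ)
    (hq0 : ∀ k i j l, 0 ≤ q k i j l)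
    (hq1 : ∀ k i j, ∑ l, q k i j l = 1)
    (N : ℕ) (hN : 1 ≤ N)
    (hgN : ∀ k i j, ∃ m : ℕ, m ≤ N ∧ g k i j = (m : ℝ) / N)
    (hqN : ∀ k i j l, ∃ m : ℕ, m ≤ N ∧ q k i j l = (m : ℝ) / N)
    (k : Fin n)
    (S : Finset ((k : Fin n) → A k)) (T : Finset ((k : Fin n) → B k))
    (hST : S.card = T.card) (hS : 1 ≤ S.card)
    (e : {x // x ∈ S} ≃ {y // y ∈ T}) :
    ∃ Qp : Polynomial (Polynomial ℤ),
      Matrix.det (Matrix.of fun a b : {x // x ∈ S} =>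
          Polynomial.C (Polynomial.C ((N : ℝ) ^ n)) * WmatPoly g q k a.1 (e b).1)
        = Qp.map (Polynomial.mapRingHom (Int.castRingHom ℝ)) ∧
      Qp.natDegree ≤ Fintype.card ((k : Fin n) → A k) * n ∧
      (∀ i, (Qp.coeff i).natDegree ≤ Fintype.card ((k : Fin n) → A k) * n) ∧
      ∀ i j, |(Qp.coeff i).coeff j| ≤
        2 ^ (Fintype.card ((k : Fin n) → A k) * n * bitsize n
          + Fintype.card ((k : Fin n) → A k) * n * bitsize N
          + Fintype.card ((k : Fin n) → A k) * bitsize (Fintype.card ((k : Fin n) → A k))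
          + 2 * bitsize (Fintype.card ((k : Fin n) → A k) * n + 1)) - 1 := by
  classical
  choose Qn hQn1 hQn2 using hqN
  choose Gn hGn1 hGn2 using hgN
  have hNR : ((N:ℝ)) ≠ 0 := by positivity
  -- the integer model
  set Mz : ((k : Fin n) → A k) → ((k : Fin n) → B k) → Matrix (Fin n) (Fin n) (Polynomial ℤ) :=
    fun ii jj => Matrix.of fun l l' =>
      (if l = l' then Polynomial.C (N : ℤ) else 0)
        - (1 - Polynomial.X) * Polynomial.C ((Qn l (ii l) (jj l) l' : ℤ)) with hMz
  set gz : ((k : Fin n) → A k) → ((k : Fin n) → B k) → Fin n → Polynomial ℤ :=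
    fun ii jj l => Polynomial.C ((Gn l (ii l) (jj l) : ℤ)) with hgz
  set d0z : ((k : Fin n) → A k) → ((k : Fin n) → B k) → Polynomial ℤ :=
    fun ii jj => (Mz ii jj).det with hd0z
  set dKz : ((k : Fin n) → A k) → ((k : Fin n) → B k) → Polynomial ℤ :=
    fun ii jj => ((Mz ii jj).updateCol k (gz ii jj)).det with hdKz
  set Ez : Matrix {x // x ∈ S} {x // x ∈ S} (Polynomial (Polynomial ℤ)) :=
    Matrix.of fun a b => Polynomial.C (dKz a.1 (e b).1)
      - Polynomial.X * Polynomial.C (d0z a.1 (e b).1) with hEz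
  have cardEq : Fintype.card {x // x ∈ S} = S.card := Fintype.card_coe S
  have hScard : S.card ≤ Fintype.card ((k : Fin n) → A k) := by
    rw [← Finset.card_univ]; exact Finset.card_le_univ S
  have h1X : (1 - Polynomial.X : Polynomial ℤ).natDegree ≤ 1 := by
    refine le_trans (Polynomial.natDegree_sub_le _ _) ?_; simp
  -- degree bounds for entries of Mz
  have hMzdeg : ∀ ii jj l l', ((Mz ii jj) l l').natDegree ≤ 1 := by
    intro ii jj l l'
    refine le_trans (Polynomial.natDegree_sub_le _ _) (max_le ?_ ?_)
    · split_ifs <;> simp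
    · calc ((1 - Polynomial.X) * Polynomial.C ((Qn l (ii l) (jj l) l' : ℤ))).natDegree
          ≤ (1 - Polynomial.X : Polynomial ℤ).natDegree
            + (Polynomial.C ((Qn l (ii l) (jj l) l' : ℤ))).natDegree := Polynomial.natDegree_mul_le
        _ ≤ 1 + 0 := add_le_add h1X (le_of_eq (Polynomial.natDegree_C _))
        _ = 1 := rfl
  have hMz'deg : ∀ ii jj l l', (((Mz ii jj).updateCol k (gz ii jj)) l l').natDegree ≤ 1 := by
    intro ii jj l l'
    rw [Matrix.updateCol_apply]
    split_ifs
    · simp [hgz]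
    · exact hMzdeg ii jj l l'
  have hd0deg : ∀ ii jj, (d0z ii jj).natDegree ≤ n := by
    intro ii jj
    have := S6.natDegree_det_le (Mz ii jj) 1 (hMzdeg ii jj)
    simpa [Fintype.card_fin] using this
  have hdKdeg : ∀ ii jj, (dKz ii jj).natDegree ≤ n := by
    intro ii jj
    have := S6.natDegree_det_le ((Mz ii jj).updateCol k (gz ii jj)) 1 (hMz'deg ii jj)
    simpa [Fintype.card_fin] using this
  -- l1 bounds
  have hMzl1 : ∀ ii jj l l', S6.l1 ((Mz ii jj) l l') ≤ 2 * (N : ℤ) := by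
    intro ii jj l l'
    have hm : (Qn l (ii l) (jj l) l' : ℤ) ≤ (N : ℤ) := by
      exact_mod_cast hQn1 l (ii l) (jj l) l'
    have hm0 : (0:ℤ) ≤ (Qn l (ii l) (jj l) l' : ℤ) := Int.ofNat_nonneg _
    by_cases h : l = l'
    · have heq : (Mz ii jj) l l' = Polynomial.C ((N:ℤ) - (Qn l (ii l) (jj l) l' : ℤ))
          + Polynomial.X * Polynomial.C ((Qn l (ii l) (jj l) l' : ℤ)) := by
        simp only [hMz, Matrix.of_apply, if_pos h]
        rw [map_sub]; ring
      rw [heq]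
      calc S6.l1 _ ≤ S6.l1 (Polynomial.C ((N:ℤ) - (Qn l (ii l) (jj l) l' : ℤ)))
            + S6.l1 (Polynomial.X * Polynomial.C ((Qn l (ii l) (jj l) l' : ℤ))) := S6.l1_add_le _ _
        _ = |(N:ℤ) - (Qn l (ii l) (jj l) l' : ℤ)| + |(Qn l (ii l) (jj l) l' : ℤ)| := by
            rw [S6.l1_C, S6.l1_X_mul, S6.l1_C]
        _ ≤ 2 * (N : ℤ) := by
            rw [abs_of_nonneg (by omega), abs_of_nonneg hm0]; omega
    · have heq : (Mz ii jj) l l' = Polynomial.C (-(Qn l (ii l) (jj l) l' : ℤ))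
          + Polynomial.X * Polynomial.C ((Qn l (ii l) (jj l) l' : ℤ)) := by
        simp only [hMz, Matrix.of_apply, if_neg h]
        rw [map_neg]; ring
      rw [heq]
      calc S6.l1 _ ≤ S6.l1 (Polynomial.C (-(Qn l (ii l) (jj l) l' : ℤ)))
            + S6.l1 (Polynomial.X * Polynomial.C ((Qn l (ii l) (jj l) l' : ℤ))) := S6.l1_add_le _ _
        _ = |(-(Qn l (ii l) (jj l) l' : ℤ))| + |(Qn l (ii l) (jj l) l' : ℤ)| := by
            rw [S6.l1_C, S6.l1_X_mul, S6.l1_C]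
        _ ≤ 2 * (N : ℤ) := by
            rw [abs_neg, abs_of_nonneg hm0]; omega
  have hMz'l1 : ∀ ii jj l l', S6.l1 (((Mz ii jj).updateCol k (gz ii jj)) l l') ≤ 2 * (N : ℤ) := by
    intro ii jj l l'
    rw [Matrix.updateCol_apply]
    split_ifs
    · rw [hgz]
      have hm : (Gn l (ii l) (jj l) : ℤ) ≤ (N : ℤ) := by exact_mod_cast hGn1 l (ii l) (jj l)
      have hm0 : (0:ℤ) ≤ (Gn l (ii l) (jj l) : ℤ) := Int.ofNat_nonneg _
      rw [S6.l1_C, abs_of_nonneg hm0]; omega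
    · exact hMzl1 ii jj l l'
  have hd0l1 : ∀ ii jj, S6.l1 (d0z ii jj) ≤ (n.factorial : ℤ) * (2 * (N:ℤ)) ^ n := by
    intro ii jj
    have := S6.l1_det_le (Mz ii jj) (2 * (N:ℤ)) (hMzl1 ii jj)
    simpa [Fintype.card_fin] using this
  have hdKl1 : ∀ ii jj, S6.l1 (dKz ii jj) ≤ (n.factorial : ℤ) * (2 * (N:ℤ)) ^ n := by
    intro ii jj
    have := S6.l1_det_le ((Mz ii jj).updateCol k (gz ii jj)) (2 * (N:ℤ)) (hMz'l1 ii jj)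
    simpa [Fintype.card_fin] using this
  -- coefficient degrees of Ez.det
  have hCDent : ∀ (a b : {x // x ∈ S}), S6.CD n (Ez a b) := by
    intro a b
    exact S6.CD_entry (hdKdeg a.1 (e b).1) (hd0deg a.1 (e b).1)
  have hCDdet : ∀ i, ((Ez.det).coeff i).natDegree ≤ S.card * n := by
    have := S6.CD_det Ez n hCDent
    rw [cardEq] at this
    exact this
  refine ⟨Ez.det, ?_, ?_, ?_, ?_⟩
  · -- the map equality
    symm
    have hdet : (Ez.det).map (Polynomial.mapRingHom (Int.castRingHom ℝ))
        = ((Polynomial.mapRingHom (Polynomial.mapRingHom (Int.castRingHom ℝ))).mapMatrix Ez).det := by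
      rw [← Polynomial.coe_mapRingHom]
      exact RingHom.map_det _ Ez
    rw [hdet]
    congr 1
    refine Matrix.ext fun a b => ?_
    -- entrywise equality
    have hcast0 : ∀ ii jj, Polynomial.map (Int.castRingHom ℝ) (d0z ii jj)
        = Polynomial.C ((N:ℝ)^n) * Matrix.det
          ((1 : Matrix (Fin n) (Fin n) (Polynomial ℝ))
            - ((1 - Polynomial.X : Polynomial ℝ)) • Matrix.of (fun l l' => Polynomial.C (q l (ii l) (jj l) l'))) := by
      intro ii jj
      rw [hd0z]
      simp only
      rw [← Polynomial.coe_mapRingHom, RingHom.map_det]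
      have hmat : (Polynomial.mapRingHom (Int.castRingHom ℝ)).mapMatrix (Mz ii jj)
          = Polynomial.C ((N:ℝ)) • ((1 : Matrix (Fin n) (Fin n) (Polynomial ℝ))
            - ((1 - Polynomial.X : Polynomial ℝ)) • Matrix.of (fun l l' => Polynomial.C (q l (ii l) (jj l) l'))) := by
        refine Matrix.ext fun l l' => ?_
        have hq0 : ((Qn l (ii l) (jj l) l' : ℕ) : ℝ) = (N:ℝ) * q l (ii l) (jj l) l' := by
          rw [hQn2 l (ii l) (jj l) l']; field_simp
        have hq : ((Qn l (ii l) (jj l) l' : ℕ) : Polynomial ℝ)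
            = Polynomial.C ((N:ℝ)) * Polynomial.C (q l (ii l) (jj l) l') := by
          rw [← Polynomial.C_mul, ← hq0, Polynomial.C_eq_natCast]
        have hNN : ((N : ℕ) : Polynomial ℝ) = Polynomial.C ((N:ℝ)) := (Polynomial.C_eq_natCast N).symm
        simp only [RingHom.mapMatrix_apply, Matrix.map_apply, hMz, Matrix.of_apply,
          Polynomial.coe_mapRingHom, Polynomial.map_sub, Polynomial.map_mul,
          Polynomial.map_one, Polynomial.map_X, Polynomial.map_natCast, apply_ite,
          Polynomial.map_zero, Matrix.smul_apply, Matrix.sub_apply, Matrix.one_apply,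
          smul_eq_mul, Polynomial.C_eq_natCast]
        rw [hq, hNN]
        by_cases h : l = l'
        · simp only [if_pos h]; ring
        · simp only [if_neg h]; ring
      rw [hmat, Matrix.det_smul, Fintype.card_fin, ← Polynomial.C_pow]
    have hcastK : ∀ ii jj, Polynomial.map (Int.castRingHom ℝ) (dKz ii jj)
        = Polynomial.C ((N:ℝ)^n) * Matrix.det (Matrix.updateCol
          ((1 : Matrix (Fin n) (Fin n) (Polynomial ℝ))
            - ((1 - Polynomial.X : Polynomial ℝ)) • Matrix.of (fun l l' => Polynomial.C (q l (ii l) (jj l) l')))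
          k (fun l => Polynomial.C (g l (ii l) (jj l)))) := by
      intro ii jj
      rw [hdKz]
      simp only
      rw [← Polynomial.coe_mapRingHom, RingHom.map_det]
      have hmat : (Polynomial.mapRingHom (Int.castRingHom ℝ)).mapMatrix
            ((Mz ii jj).updateCol k (gz ii jj))
          = Polynomial.C ((N:ℝ)) • (Matrix.updateCol
          ((1 : Matrix (Fin n) (Fin n) (Polynomial ℝ))
            - ((1 - Polynomial.X : Polynomial ℝ)) • Matrix.of (fun l l' => Polynomial.C (q l (ii l) (jj l) l')))
          k (fun l => Polynomial.C (g l (ii l) (jj l)))) := by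
        refine Matrix.ext fun l l' => ?_
        by_cases h : l' = k
        · have hg0 : ((Gn l (ii l) (jj l) : ℕ) : ℝ) = (N:ℝ) * g l (ii l) (jj l) := by
            rw [hGn2 l (ii l) (jj l)]; field_simp
          have hg : ((Gn l (ii l) (jj l) : ℕ) : Polynomial ℝ)
              = Polynomial.C ((N:ℝ)) * Polynomial.C (g l (ii l) (jj l)) := by
            rw [← Polynomial.C_mul, ← hg0, Polynomial.C_eq_natCast]
          simp only [RingHom.mapMatrix_apply, Matrix.map_apply, Matrix.updateCol_apply,
            if_pos h, hgz, Polynomial.coe_mapRingHom, Polynomial.map_natCast,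
            Matrix.smul_apply, smul_eq_mul, Polynomial.C_eq_natCast]
          rw [hg, Polynomial.C_eq_natCast]; try ring
        · have hq0 : ((Qn l (ii l) (jj l) l' : ℕ) : ℝ) = (N:ℝ) * q l (ii l) (jj l) l' := by
            rw [hQn2 l (ii l) (jj l) l']; field_simp
          have hq : ((Qn l (ii l) (jj l) l' : ℕ) : Polynomial ℝ)
              = Polynomial.C ((N:ℝ)) * Polynomial.C (q l (ii l) (jj l) l') := by
            rw [← Polynomial.C_mul, ← hq0, Polynomial.C_eq_natCast]
          have hNN : ((N : ℕ) : Polynomial ℝ) = Polynomial.C ((N:ℝ)) := (Polynomial.C_eq_natCast N).symm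
          simp only [RingHom.mapMatrix_apply, Matrix.map_apply, Matrix.updateCol_apply,
            if_neg h, hMz, Matrix.of_apply,
            Polynomial.coe_mapRingHom, Polynomial.map_sub, Polynomial.map_mul,
            Polynomial.map_one, Polynomial.map_X, Polynomial.map_natCast, apply_ite,
            Polynomial.map_zero, Matrix.smul_apply, Matrix.sub_apply, Matrix.one_apply,
            smul_eq_mul, Polynomial.C_eq_natCast]
          rw [hq, hNN]
          by_cases h2 : l = l'
          · simp only [if_pos h2]; ring
          · simp only [if_neg h2]; ring
      rw [hmat, Matrix.det_smul, Fintype.card_fin, ← Polynomial.C_pow]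
    simp only [RingHom.mapMatrix_apply, Matrix.map_apply, hEz, Matrix.of_apply,
      Polynomial.coe_mapRingHom, Polynomial.map_sub, Polynomial.map_mul,
      Polynomial.map_X, Polynomial.map_C]
    rw [hcastK, hcast0, WmatPoly]
    simp only [Polynomial.C_mul]
    ring
  · -- z-degree
    have hent : ∀ (a b : {x // x ∈ S}), (Ez a b).natDegree ≤ 1 := by
      intro a b
      refine le_trans (Polynomial.natDegree_sub_le _ _) (max_le (by simp) ?_)
      calc (Polynomial.X * Polynomial.C (d0z a.1 (e b).1)).natDegree
          ≤ (Polynomial.X : Polynomial (Polynomial ℤ)).natDegree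
            + (Polynomial.C (d0z a.1 (e b).1)).natDegree := Polynomial.natDegree_mul_le
        _ ≤ 1 + 0 := add_le_add Polynomial.natDegree_X_le (le_of_eq (Polynomial.natDegree_C _))
        _ = 1 := rfl
    have := S6.natDegree_det_le Ez 1 hent
    rw [cardEq, mul_one] at this
    refine le_trans this (le_trans hScard ?_)
    exact Nat.le_mul_of_pos_right _ (by omega)
  · -- λ-degrees of coefficients
    intro i
    exact le_trans (hCDdet i) (Nat.mul_le_mul_right n hScard)
  · -- coefficient bounds
    intro i j
    have hpos : (0:ℤ) < 2 ^ (Fintype.card ((k : Fin n) → A k) * n * bitsize n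
          + Fintype.card ((k : Fin n) → A k) * n * bitsize N
          + Fintype.card ((k : Fin n) → A k) * bitsize (Fintype.card ((k : Fin n) → A k))
          + 2 * bitsize (Fintype.card ((k : Fin n) → A k) * n + 1)) := by positivity
    set D := Fintype.card ((k : Fin n) → A k) * n + 1 with hD
    have hCDlt : ∀ i', ((Ez.det).coeff i').natDegree < D := by
      intro i'
      have := le_trans (hCDdet i') (Nat.mul_le_mul_right n hScard)
      omega
    by_cases hj : j < D
    · rw [← S6.coeff_eval_X_pow Ez.det D hCDlt i j hj]
      refine le_trans (S6.abs_coeff_le_l1 _ _) ?_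
      have hev : Polynomial.eval ((Polynomial.X : Polynomial ℤ) ^ D) Ez.det
          = ((Polynomial.evalRingHom ((Polynomial.X : Polynomial ℤ) ^ D)).mapMatrix Ez).det := by
        rw [← Polynomial.coe_evalRingHom]
        exact RingHom.map_det _ Ez
      rw [hev]
      have hent : ∀ (a b : {x // x ∈ S}),
          S6.l1 (((Polynomial.evalRingHom ((Polynomial.X : Polynomial ℤ) ^ D)).mapMatrix Ez) a b)
            ≤ 2 * ((n.factorial : ℤ) * (2 * (N:ℤ)) ^ n) := by
        intro a b
        have heq : ((Polynomial.evalRingHom ((Polynomial.X : Polynomial ℤ) ^ D)).mapMatrix Ez) a b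
            = dKz a.1 (e b).1 - Polynomial.X ^ D * d0z a.1 (e b).1 := by
          simp [hEz, Polynomial.eval_mul]
          ring
        rw [heq]
        calc S6.l1 (dKz a.1 (e b).1 - Polynomial.X ^ D * d0z a.1 (e b).1)
            ≤ S6.l1 (dKz a.1 (e b).1) + S6.l1 (Polynomial.X ^ D * d0z a.1 (e b).1) :=
              S6.l1_sub_le _ _
          _ = S6.l1 (dKz a.1 (e b).1) + S6.l1 (d0z a.1 (e b).1) := by rw [S6.l1_X_pow_mul]
          _ ≤ (n.factorial : ℤ) * (2 * (N:ℤ)) ^ n + (n.factorial : ℤ) * (2 * (N:ℤ)) ^ n :=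
              add_le_add (hdKl1 _ _) (hd0l1 _ _)
          _ = 2 * ((n.factorial : ℤ) * (2 * (N:ℤ)) ^ n) := by ring
      have hldet := S6.l1_det_le _ _ hent
      rw [cardEq] at hldet
      refine le_trans hldet ?_
      have hs1 : 1 ≤ Fintype.card ((k : Fin n) → A k) := Fintype.card_pos
      have hnat := S6.final_chain S.card (Fintype.card ((k : Fin n) → A k)) n N hn hN hScard hs1
      have h2f : (1:ℕ) ≤ 2 ^ (Fintype.card ((k : Fin n) → A k) * n * bitsize n
          + Fintype.card ((k : Fin n) → A k) * n * bitsize N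
          + Fintype.card ((k : Fin n) → A k) * bitsize (Fintype.card ((k : Fin n) → A k))
          + 2 * bitsize (Fintype.card ((k : Fin n) → A k) * n + 1)) := Nat.one_le_two_pow
      have hcast := (Nat.cast_le (α := ℤ)).mpr hnat
      rw [Nat.cast_sub h2f] at hcast
      push_cast at hcast
      calc (S.card.factorial : ℤ) * (2 * ((n.factorial : ℤ) * (2 * (N:ℤ)) ^ n)) ^ S.card
          = (S.card.factorial : ℤ) * ((2:ℤ) * (n.factorial : ℤ) * (2 * (N:ℤ)) ^ n) ^ S.card := by
            ring
        _ ≤ _ := hcast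
    · push_neg at hj
      have hz : (Ez.det.coeff i).coeff j = 0 := by
        apply Polynomial.coeff_eq_zero_of_natDegree_lt
        exact lt_of_lt_of_le (hCDlt i) hj
      rw [hz, abs_zero]
      omega
end

section
/- Fix an initial state k∈K, suppose assumption (H_N) holds, and let λ∈(0,1] with N·λ∈ℕ. Let r∈ℕ and let z∈[0,1] with 2^r·z∈ℕ. Then for every (𝐢,𝐣)∈I×J, the number 2^r·N^{2n}·W^k_λ(z)[𝐢,𝐣] is an integer, and |W^k_λ(z)[𝐢,𝐣]| ≤ 2·n^{n/2}. -/
open Filter Set Topology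

open Matrix


lemma trace_eq_sum_eig {n : ℕ} {G : Matrix (Fin n) (Fin n) ℝ} (hG : G.IsHermitian) :
    G.trace = ∑ i, hG.eigenvalues i := by
  rw [hG.trace_eq_sum_eigenvalues]
  simp

lemma hadamard_lite {n : ℕ} (hn : 1 ≤ n) (A : Matrix (Fin n) (Fin n) ℝ)
    (h : ∀ i j, |A i j| ≤ 1) : A.det ^ 2 ≤ (n : ℝ) ^ n := by
  have hnR : (0:ℝ) < n := by exact_mod_cast hn
  set G := Aᴴ * A with hGdef
  have hG : G.PosSemidef := Matrix.posSemidef_conjTranspose_mul_self A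
  have hH := hG.isHermitian
  have hdet : A.det ^ 2 = G.det := by
    rw [hGdef, Matrix.det_mul, Matrix.det_conjTranspose]
    simp [sq]
  have heig : G.det = ∏ i, hH.eigenvalues i := by
    rw [hH.det_eq_prod_eigenvalues]; norm_num
  have htr : G.trace ≤ (n:ℝ) * n := by
    rw [Matrix.trace]
    have : ∀ i, G.diag i ≤ (n:ℝ) := by
      intro i
      rw [hGdef]
      have : (Aᴴ * A).diag i = ∑ j, A j i * A j i := by
        simp [Matrix.diag, Matrix.mul_apply, Matrix.conjTranspose_apply, mul_comm]
      rw [this]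
      calc ∑ j, A j i * A j i ≤ ∑ _j : Fin n, (1:ℝ) := by
            apply Finset.sum_le_sum
            intro j _
            have := h j i
            nlinarith [abs_nonneg (A j i), sq_abs (A j i)]
        _ = (n:ℝ) := by simp
    calc ∑ i, G.diag i ≤ ∑ _i : Fin n, (n:ℝ) := Finset.sum_le_sum fun i _ => this i
      _ = (n:ℝ) * n := by simp [mul_comm]
  have hnn : ∀ i, 0 ≤ hH.eigenvalues i := hG.eigenvalues_nonneg
  have hamgm : ∏ i, (hH.eigenvalues i) ^ ((n:ℝ)⁻¹) ≤ ∑ i, (n:ℝ)⁻¹ * hH.eigenvalues i := by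
    apply Real.geom_mean_le_arith_mean_weighted
    · intro i _; positivity
    · simp [Finset.card_univ]; field_simp
    · intro i _; exact hnn i
  have hprod : (∏ i, hH.eigenvalues i) ^ ((n:ℝ)⁻¹) ≤ (n:ℝ) := by
    rw [← Real.finset_prod_rpow _ _ (fun i _ => hnn i)]
    calc _ ≤ ∑ i, (n:ℝ)⁻¹ * hH.eigenvalues i := hamgm
      _ = (n:ℝ)⁻¹ * G.trace := by rw [trace_eq_sum_eig hH, Finset.mul_sum]
      _ ≤ (n:ℝ)⁻¹ * ((n:ℝ) * n) := by
          apply mul_le_mul_of_nonneg_left htr (by positivity)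
      _ = (n:ℝ) := by field_simp
  have hPnn : 0 ≤ ∏ i, hH.eigenvalues i := Finset.prod_nonneg fun i _ => hnn i
  have : ∏ i, hH.eigenvalues i ≤ (n:ℝ) ^ n := by
    have h1 : ((∏ i, hH.eigenvalues i) ^ ((n:ℝ)⁻¹)) ^ n ≤ (n:ℝ) ^ n :=
      pow_le_pow_left₀ (Real.rpow_nonneg hPnn _) hprod n
    rwa [← Real.rpow_natCast ((∏ i, hH.eigenvalues i) ^ ((n:ℝ)⁻¹)) n,
      ← Real.rpow_mul hPnn, inv_mul_cancel₀ (ne_of_gt hnR), Real.rpow_one] at h1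
  rw [hdet, heig]; exact this


/-- Under (H_N), for λ ∈ (0,1] with N·λ ∈ ℕ, r ∈ ℕ and z ∈ [0,1] with
2^r·z ∈ ℕ, every entry of W^k_λ(z) becomes an integer after multiplication by 2^r·N^{2n},
and has absolute value at most 2·n^{n/2}. -/
theorem stmt7
    {n : ℕ} (hn : 1 ≤ n)
    {A B : Fin n → Type*} [∀ k, Fintype (A k)] [∀ k, Fintype (B k)]
    [∀ k, Nonempty (A k)] [∀ k, Nonempty (B k)]
    (g : (k : Fin n) → A k → B k → ℝ)
    (q : (k : Fin n) → A k → B k → Fin n → ℝ)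
    (hq0 : ∀ k i j l, 0 ≤ q k i j l)
    (hq1 : ∀ k i j, ∑ l, q k i j l = 1)
    (N : ℕ) (hN : 1 ≤ N)
    (hgN : ∀ k i j, ∃ m : ℕ, m ≤ N ∧ g k i j = (m : ℝ) / N)
    (hqN : ∀ k i j l, ∃ m : ℕ, m ≤ N ∧ q k i j l = (m : ℝ) / N)
    (k : Fin n)
    (lam : ℝ) (hlam : lam ∈ Set.Ioc (0:ℝ) 1) (hNlam : ∃ m : ℕ, (m : ℝ) = N * lam)
    (r : ℕ) (z : ℝ) (hz : z ∈ Set.Icc (0:ℝ) 1) (hz2 : ∃ m : ℕ, (m : ℝ) = 2 ^ r * z) :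
    ∀ (ii : (k : Fin n) → A k) (jj : (k : Fin n) → B k),
      (∃ a : ℤ, (a : ℝ) = 2 ^ r * (N : ℝ) ^ (2 * n) * Wmat g q k lam z ii jj) ∧
      |Wmat g q k lam z ii jj| ≤ 2 * Real.sqrt n ^ n := by
  intro ii jj
  have hN0 : (N:ℝ) ≠ 0 := by positivity
  set M : Matrix (Fin n) (Fin n) ℝ :=
    1 - (1 - lam) • Matrix.of (fun l l' => q l (ii l) (jj l) l') with hMdef
  set gc : Fin n → ℝ := fun l => g l (ii l) (jj l) with hgcdef
  have hMapp : ∀ l l', M l l' = (if l = l' then 1 else 0) - (1 - lam) * q l (ii l) (jj l) l' := by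
    intro l l'
    simp [hMdef, Matrix.sub_apply, Matrix.one_apply, Matrix.smul_apply, smul_eq_mul]
  have hq01 : ∀ l l', 0 ≤ q l (ii l) (jj l) l' ∧ q l (ii l) (jj l) l' ≤ 1 := by
    intro l l'
    refine ⟨hq0 _ _ _ _, ?_⟩
    have := Finset.single_le_sum (f := fun l' => q l (ii l) (jj l) l')
      (fun i _ => hq0 _ _ _ _) (Finset.mem_univ l')
    rwa [hq1] at this
  have hc0 : 0 ≤ 1 - lam := by linarith [hlam.2]
  have hc1 : 1 - lam ≤ 1 := by linarith [hlam.1]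
  have hMb : ∀ l l', |M l l'| ≤ 1 := by
    intro l l'
    rw [hMapp, abs_le]
    have h1 := hq01 l l'
    constructor <;> [skip; skip] <;>
    · split_ifs <;> nlinarith [h1.1, h1.2]
  have hgb : ∀ l, 0 ≤ gc l ∧ gc l ≤ 1 := by
    intro l
    obtain ⟨m, hm, he⟩ := hgN l (ii l) (jj l)
    have hmN : (m:ℝ) ≤ N := by exact_mod_cast hm
    constructor
    · rw [hgcdef]; simp only; rw [he]; positivity
    · rw [hgcdef]; simp only; rw [he, div_le_one (by positivity)]; exact hmN
  have hWdef : Wmat g q k lam z ii jj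
      = dK g q k ii jj lam - z * dZero q ii jj lam := rfl
  -- express Wmat as a single determinant
  set w : Fin n → ℝ := fun l => gc l + (-z) * M l k with hwdef
  have hWdet : Wmat g q k lam z ii jj = (M.updateCol k w).det := by
    have h1 : w = fun l => gc l + ((-z) • fun l => M l k) l := by
      funext l; simp [hwdef]
    rw [hWdef, h1]
    rw [show (fun l => gc l + ((-z) • fun l => M l k) l) = gc + ((-z) • fun l => M l k) from rfl]
    rw [Matrix.det_updateCol_add, Matrix.det_updateCol_smul,
      Matrix.updateCol_eq_self]
    show dK g q k ii jj lam - z * dZero q ii jj lam = dK g q k ii jj lam + (-z) * M.det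
    rw [show dZero q ii jj lam = M.det from rfl]; ring
  set A' : Matrix (Fin n) (Fin n) ℝ := M.updateCol k (fun l => w l / 2) with hA'def
  have hA'b : ∀ i j, |A' i j| ≤ 1 := by
    intro i j
    rw [hA'def, Matrix.updateCol_apply]
    split_ifs with h
    · have h1 := hgb i
      have h2 := hMb i k
      have h3 := hz.1
      have h4 := hz.2
      have h5 : |z * M i k| ≤ 1 := by
        rw [abs_mul]
        calc |z| * |M i k| ≤ 1 * 1 :=
              mul_le_mul (abs_le.mpr ⟨by linarith, h4⟩) h2 (abs_nonneg _) zero_le_one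
          _ = 1 := one_mul 1
      have h6 := abs_le.mp h5
      rw [hwdef, abs_le]
      constructor <;> simp only <;> nlinarith
    · exact hMb i j
  have hdet2 : (M.updateCol k w).det = 2 * A'.det := by
    have : w = fun l => ((2:ℝ) • fun l => w l / 2) l := by
      funext l; simp [smul_eq_mul]; ring
    conv_lhs => rw [this]
    rw [show (fun l => ((2:ℝ) • fun l => w l / 2) l) = ((2:ℝ) • fun l => w l / 2) from rfl]
    rw [Matrix.det_updateCol_smul, hA'def]
  have hsq : A'.det ^ 2 ≤ (n:ℝ) ^ n := hadamard_lite hn A' hA'b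
  have hsqrt : (Real.sqrt n ^ n) ^ 2 = (n:ℝ) ^ n := by
    rw [← pow_mul, mul_comm, pow_mul, Real.sq_sqrt (by positivity)]
  have hbound : |Wmat g q k lam z ii jj| ≤ 2 * Real.sqrt n ^ n := by
    rw [hWdet, hdet2, abs_mul, abs_two]
    have h1 : |A'.det| ≤ Real.sqrt n ^ n := by
      nlinarith [abs_nonneg A'.det, sq_abs A'.det, Real.sqrt_nonneg (n:ℝ),
        pow_nonneg (Real.sqrt_nonneg (n:ℝ)) n]
    linarith
  refine ⟨?_, hbound⟩
  -- integrality
  obtain ⟨ml, hml⟩ := hNlam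
  obtain ⟨mz, hmz⟩ := hz2
  choose mq hmqle hmqe using fun (l l' : Fin n) => hqN l (ii l) (jj l) l'
  choose mg hmgle hmge using fun l => hgN l (ii l) (jj l)
  set B0 : Matrix (Fin n) (Fin n) ℤ :=
    Matrix.of (fun l l' => (if l = l' then ((N:ℤ))^2 else 0) - ((N:ℤ) - ml) * mq l l') with hB0def
  set BK : Matrix (Fin n) (Fin n) ℤ :=
    B0.updateCol k (fun l => (N:ℤ) * mg l) with hBKdef
  have harith : ∀ x : ℝ, (N:ℝ)^2 * ((1 - lam) * (x/N)) = ((N:ℝ) - ml) * x := by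
    intro x
    field_simp
    linear_combination x * hml
  have hB0e : ∀ l l', (N:ℝ)^2 * M l l' = ((B0 l l' : ℤ) : ℝ) := by
    intro l l'
    rw [hMapp, hB0def]
    simp only [Matrix.of_apply]
    rw [hmqe l l']
    push_cast
    split_ifs <;> linear_combination (-1 : ℝ) * harith ((mq l l' : ℕ) : ℝ)
  have hB0mat : ((N:ℝ)^2) • M = B0.map (Int.cast : ℤ → ℝ) := by
    ext i j
    simp only [Matrix.smul_apply, smul_eq_mul, Matrix.map_apply]
    exact hB0e i j
  have hBKmat : ((N:ℝ)^2) • (M.updateCol k gc) = BK.map (Int.cast : ℤ → ℝ) := by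
    ext i j
    simp only [Matrix.smul_apply, smul_eq_mul, Matrix.map_apply, hBKdef,
      Matrix.updateCol_apply]
    split_ifs
    · push_cast
      rw [hgcdef]
      simp only
      rw [hmge i]
      field_simp
    · exact hB0e i j
  have hdet0 : (N:ℝ)^(2*n) * dZero q ii jj lam = ((B0.det : ℤ) : ℝ) := by
    have h1 : (((N:ℝ)^2) • M).det = ((N:ℝ)^2)^n * M.det := by
      rw [Matrix.det_smul]; simp [Fintype.card_fin]
    have h2 : (B0.map (Int.cast : ℤ → ℝ)).det = ((B0.det : ℤ) : ℝ) := by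
      rw [show B0.map (Int.cast : ℤ → ℝ) = (Int.castRingHom ℝ).mapMatrix B0 from rfl,
        ← RingHom.map_det]
      simp
    rw [show dZero q ii jj lam = M.det from rfl, ← h2, ← hB0mat, h1, ← pow_mul]
  have hdetK : (N:ℝ)^(2*n) * dK g q k ii jj lam = ((BK.det : ℤ) : ℝ) := by
    have h1 : (((N:ℝ)^2) • (M.updateCol k gc)).det
        = ((N:ℝ)^2)^n * (M.updateCol k gc).det := by
      rw [Matrix.det_smul]; simp [Fintype.card_fin]
    have h2 : (BK.map (Int.cast : ℤ → ℝ)).det = ((BK.det : ℤ) : ℝ) := by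
      rw [show BK.map (Int.cast : ℤ → ℝ) = (Int.castRingHom ℝ).mapMatrix BK from rfl,
        ← RingHom.map_det]
      simp
    rw [show dK g q k ii jj lam = (M.updateCol k gc).det from rfl, ← h2, ← hBKmat, h1,
      ← pow_mul]
  refine ⟨2^r * BK.det - mz * B0.det, ?_⟩
  rw [hWdef]
  simp only [Int.cast_sub, Int.cast_mul, Int.cast_pow, Int.cast_ofNat, Int.cast_natCast]
  rw [← hdetK, ← hdet0]
  linear_combination (-(N:ℝ)^(2*n) * dZero q ii jj lam) * hmz
end

section
/- Suppose assumption (H_N) holds and let λ∈(0,1] with N·λ∈ℕ. Then for every (𝐢,𝐣)∈I×J and every k∈K, the numbers N^{2n}·d^0_λ(𝐢,𝐣) and N^{2n}·d^k_λ(𝐢,𝐣) are integers of absolute value at most n^{n/2}·N^{2n}. -/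
open Filter Set Topology

section HelperLemmas
open Matrix

lemma amgm {n : ℕ} (hn : 1 ≤ n) (f : Fin n → ℝ) (hf : ∀ i, 0 ≤ f i) {S : ℝ}
    (hS : ∑ i, f i ≤ S) : ∏ i, f i ≤ (S / n) ^ n := by
  have hn0 : (n : ℝ) ≠ 0 := Nat.cast_ne_zero.mpr (by omega)
  have key := Real.geom_mean_le_arith_mean_weighted Finset.univ (fun _ => 1 / (n:ℝ)) f
    (fun i _ => by positivity)
    (by simp [Finset.sum_const, mul_comm, div_eq_mul_inv]; field_simp)
    (fun i _ => hf i)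
  have hle : (∑ i, (1 / (n:ℝ)) * f i) ≤ S / n := by
    rw [← Finset.mul_sum]
    have h0 : (0:ℝ) ≤ ((n:ℝ))⁻¹ := inv_nonneg.mpr (Nat.cast_nonneg n)
    calc 1/(n:ℝ) * ∑ i, f i = ((n:ℝ))⁻¹ * ∑ i, f i := by rw [one_div]
      _ ≤ ((n:ℝ))⁻¹ * S := mul_le_mul_of_nonneg_left hS h0
      _ = S / n := by rw [div_eq_inv_mul]
  have h1 : ∏ i, f i = (∏ i, f i ^ ((1:ℝ) / n)) ^ n := by
    rw [← Finset.prod_pow]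
    refine Finset.prod_congr rfl fun i _ => ?_
    rw [← Real.rpow_natCast (f i ^ ((1:ℝ)/n)) n, ← Real.rpow_mul (hf i)]
    field_simp
    simp
  rw [h1]
  exact pow_le_pow_left₀ (Finset.prod_nonneg fun i _ => Real.rpow_nonneg (hf i) _)
    (key.trans hle) n

lemma trace_eq_sum_eigs {n : ℕ} {P : Matrix (Fin n) (Fin n) ℝ} (hH : P.IsHermitian) :
    P.trace = ∑ i, hH.eigenvalues i := by
  rw [hH.trace_eq_sum_eigenvalues]
  simp [RCLike.ofReal]

lemma det_bound {n : ℕ} (hn : 1 ≤ n) (M : Matrix (Fin n) (Fin n) ℝ)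
    (h : ∀ i j, |M i j| ≤ 1) : |M.det| ≤ Real.sqrt n ^ n := by
  have hP : (M * Mᴴ).PosSemidef := Matrix.posSemidef_self_mul_conjTranspose M
  have hH := hP.isHermitian
  have hdet : (M * Mᴴ).det = ∏ i, hH.eigenvalues i := by
    have := hH.det_eq_prod_eigenvalues
    simpa using this
  have htr : (M * Mᴴ).trace ≤ (n:ℝ)^2 := by
    have : (M * Mᴴ).trace = ∑ i, ∑ j, M i j * M i j := by
      simp [Matrix.trace, Matrix.diag, Matrix.mul_apply, Matrix.conjTranspose_apply]
    rw [this]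
    calc ∑ i, ∑ j, M i j * M i j ≤ ∑ _i : Fin n, ∑ _j : Fin n, (1:ℝ) := by
          refine Finset.sum_le_sum fun i _ => Finset.sum_le_sum fun j _ => ?_
          nlinarith [h i j, abs_nonneg (M i j), sq_abs (M i j)]
      _ = (n:ℝ)^2 := by simp; ring
  have hsum : ∑ i, hH.eigenvalues i ≤ (n:ℝ)^2 := by
    rw [← trace_eq_sum_eigs hH]; exact htr
  have hprod : ∏ i, hH.eigenvalues i ≤ ((n:ℝ)^2 / n) ^ n :=
    amgm hn _ (fun i => hP.eigenvalues_nonneg i) hsum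
  have hn0 : (n : ℝ) ≠ 0 := Nat.cast_ne_zero.mpr (by omega)
  have hnn : ((n:ℝ)^2 / n) = (n:ℝ) := by field_simp
  have hsq : M.det ^ 2 ≤ (n:ℝ) ^ n := by
    have : M.det ^ 2 = (M * Mᴴ).det := by
      rw [Matrix.det_mul, Matrix.det_conjTranspose]
      simp [sq]
    rw [this, hdet]
    calc ∏ i, hH.eigenvalues i ≤ ((n:ℝ)^2 / n) ^ n := hprod
      _ = (n:ℝ) ^ n := by rw [hnn]
  calc |M.det| = Real.sqrt (M.det ^ 2) := (Real.sqrt_sq_eq_abs _).symm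
    _ ≤ Real.sqrt ((n:ℝ) ^ n) := Real.sqrt_le_sqrt hsq
    _ = Real.sqrt n ^ n := by
        rw [show ((n:ℝ)^n) = (Real.sqrt n ^ n)^2 by
          rw [← pow_mul, mul_comm n 2, pow_mul, Real.sq_sqrt (by positivity)],
          Real.sqrt_sq (by positivity)]

lemma exists_int_det {n N : ℕ} (M : Matrix (Fin n) (Fin n) ℝ)
    (h : ∀ l l', ∃ z : ℤ, (z : ℝ) = (N:ℝ)^2 * M l l') :
    ∃ a : ℤ, (a : ℝ) = (N : ℝ) ^ (2 * n) * M.det := by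
  choose Z hZ using h
  refine ⟨(Matrix.of Z).det, ?_⟩
  have hmap : (Matrix.of Z).map ⇑(Int.castRingHom ℝ) = ((N:ℝ)^2) • M := by
    ext l l'; simp [hZ]
  have := (Int.castRingHom ℝ).map_det (Matrix.of Z)
  simp only [RingHom.mapMatrix_apply] at this
  rw [show ((Matrix.of Z).det : ℝ) = (Int.castRingHom ℝ) (Matrix.of Z).det from rfl, this,
    hmap, Matrix.det_smul]
  rw [Fintype.card_fin, ← pow_mul]

end HelperLemmas

/-- Under (H_N), for λ ∈ (0,1] with N·λ ∈ ℕ, for every pair of pure stationary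
strategies and every k, N^{2n}·d^0_λ(𝐢,𝐣) and N^{2n}·d^k_λ(𝐢,𝐣) are integers of absolute
value at most n^{n/2}·N^{2n}. -/
theorem stmt8
    {n : ℕ} (hn : 1 ≤ n)
    {A B : Fin n → Type*} [∀ k, Fintype (A k)] [∀ k, Fintype (B k)]
    [∀ k, Nonempty (A k)] [∀ k, Nonempty (B k)]
    (g : (k : Fin n) → A k → B k → ℝ)
    (q : (k : Fin n) → A k → B k → Fin n → ℝ)
    (hq0 : ∀ k i j l, 0 ≤ q k i j l)
    (hq1 : ∀ k i j, ∑ l, q k i j l = 1)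
    (N : ℕ) (hN : 1 ≤ N)
    (hgN : ∀ k i j, ∃ m : ℕ, m ≤ N ∧ g k i j = (m : ℝ) / N)
    (hqN : ∀ k i j l, ∃ m : ℕ, m ≤ N ∧ q k i j l = (m : ℝ) / N)
    (lam : ℝ) (hlam : lam ∈ Set.Ioc (0:ℝ) 1) (hNlam : ∃ m : ℕ, (m : ℝ) = N * lam) :
    ∀ (ii : (k : Fin n) → A k) (jj : (k : Fin n) → B k) (k : Fin n),
      (∃ a : ℤ, (a : ℝ) = (N : ℝ) ^ (2 * n) * dZero q ii jj lam ∧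
        |(a : ℝ)| ≤ Real.sqrt n ^ n * (N : ℝ) ^ (2 * n)) ∧
      (∃ a : ℤ, (a : ℝ) = (N : ℝ) ^ (2 * n) * dK g q k ii jj lam ∧
        |(a : ℝ)| ≤ Real.sqrt n ^ n * (N : ℝ) ^ (2 * n)) := by
  obtain ⟨hl0, hl1⟩ := hlam
  obtain ⟨p, hp⟩ := hNlam
  have hN0 : (N : ℝ) ≠ 0 := Nat.cast_ne_zero.mpr (by omega)
  have hNpos : (0:ℝ) < N := by positivity
  intro ii jj k
  set M0 : Matrix (Fin n) (Fin n) ℝ :=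
    1 - (1 - lam) • Matrix.of (fun l l' => q l (ii l) (jj l) l') with hM0
  set MK : Matrix (Fin n) (Fin n) ℝ :=
    Matrix.updateCol M0 k (fun l => g l (ii l) (jj l)) with hMK
  have e0 : dZero q ii jj lam = M0.det := rfl
  have eK : dK g q k ii jj lam = MK.det := rfl
  have hqle1 : ∀ l l', q l (ii l) (jj l) l' ≤ 1 := by
    intro l l'
    have h := Finset.single_le_sum (f := fun l' => q l (ii l) (jj l) l')
      (fun i _ => hq0 _ _ _ i) (Finset.mem_univ l')
    rw [hq1] at h
    exact h
  have hM0app : ∀ l l', M0 l l' =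
      (if l = l' then 1 else 0) - (1 - lam) * q l (ii l) (jj l) l' := by
    intro l l'
    simp [hM0, Matrix.sub_apply, Matrix.one_apply, Matrix.smul_apply]
  have hbound0 : ∀ l l', |M0 l l'| ≤ 1 := by
    intro l l'
    rw [hM0app l l', abs_le]
    have h1 := hq0 l (ii l) (jj l) l'
    have h2 := hqle1 l l'
    constructor <;> split_ifs <;> nlinarith
  have hg01 : ∀ l, 0 ≤ g l (ii l) (jj l) ∧ g l (ii l) (jj l) ≤ 1 := by
    intro l
    obtain ⟨m, hm, hgm⟩ := hgN l (ii l) (jj l)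
    rw [hgm]
    constructor
    · positivity
    · rw [div_le_one hNpos]
      exact_mod_cast hm
  have hboundK : ∀ l l', |MK l l'| ≤ 1 := by
    intro l l'
    rw [hMK, Matrix.updateCol_apply]
    split_ifs
    · rw [abs_le]
      exact ⟨by linarith [(hg01 l).1], (hg01 l).2⟩
    · exact hbound0 l l'
  have hIz0 : ∀ l l', ∃ z : ℤ, (z : ℝ) = (N:ℝ)^2 * M0 l l' := by
    intro l l'
    obtain ⟨m, hm, hqm⟩ := hqN l (ii l) (jj l) l'
    by_cases hll : l = l'
    · refine ⟨(N:ℤ)^2 - ((N:ℤ) - p) * m, ?_⟩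
      rw [hM0app l l', hqm, if_pos hll]
      push_cast
      rw [hp]
      field_simp
    · refine ⟨-(((N:ℤ) - p) * m), ?_⟩
      rw [hM0app l l', hqm, if_neg hll]
      push_cast
      rw [hp]
      field_simp
      ring
  have hIzK : ∀ l l', ∃ z : ℤ, (z : ℝ) = (N:ℝ)^2 * MK l l' := by
    intro l l'
    by_cases hlk : l' = k
    · obtain ⟨m, hm, hgm⟩ := hgN l (ii l) (jj l)
      refine ⟨(N:ℤ) * m, ?_⟩
      rw [hMK, Matrix.updateCol_apply, if_pos hlk, hgm]
      push_cast
      field_simp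
    · obtain ⟨z, hz⟩ := hIz0 l l'
      refine ⟨z, ?_⟩
      rw [hMK, Matrix.updateCol_apply, if_neg hlk]
      exact hz
  have key : ∀ (M : Matrix (Fin n) (Fin n) ℝ),
      (∀ l l', ∃ z : ℤ, (z : ℝ) = (N:ℝ)^2 * M l l') → (∀ l l', |M l l'| ≤ 1) →
      ∃ a : ℤ, (a : ℝ) = (N : ℝ) ^ (2 * n) * M.det ∧
        |(a : ℝ)| ≤ Real.sqrt n ^ n * (N : ℝ) ^ (2 * n) := by
    intro M hI hB
    obtain ⟨a, ha⟩ := exists_int_det M hI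
    refine ⟨a, ha, ?_⟩
    have hd := det_bound hn M hB
    calc |(a:ℝ)| = (N:ℝ)^(2*n) * |M.det| := by
          rw [ha, abs_mul, abs_of_nonneg (by positivity : (0:ℝ) ≤ (N:ℝ)^(2*n))]
      _ ≤ (N:ℝ)^(2*n) * (Real.sqrt n ^ n) :=
          mul_le_mul_of_nonneg_left hd (by positivity)
      _ = Real.sqrt n ^ n * (N : ℝ) ^ (2 * n) := mul_comm _ _
  rw [e0, eK]
  exact ⟨key M0 hIz0 hbound0, key MK hIzK hboundK⟩
end

section
/- Fix an initial state k∈K and λ∈(0,1]. Then the map z↦val W^k_λ(z) is continuous and strictly decreasing on ℝ. Moreover, whenever the limits F^k(z):=lim_{λ→0⁺} λ^{−n}·val W^k_λ(z) exist in ℝ∪{−∞,+∞}, the map z↦F^k(z) is non-increasing, and strictly decreasing on the set of z where F^k(z) is finite. -/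
open Filter Set Topology

section AuxLemmas
open Polynomial



section MatValLemmas
variable {α β : Type*} [Fintype α] [Fintype β]

lemma sum_weight_const {x : α → ℝ} {y : β → ℝ} (hx : ∑ a, x a = 1) (hy : ∑ b, y b = 1)
    (c : ℝ) : ∑ a, ∑ b, x a * c * y b = c := by
  have h : ∀ a, ∑ b, x a * c * y b = x a * c := fun a => by
    rw [← Finset.mul_sum, hy, mul_one]
  simp_rw [h, ← Finset.sum_mul, hx, one_mul]

lemma pay_le_pay {M N : α → β → ℝ} {c : ℝ} (h : ∀ a b, M a b ≤ N a b + c)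
    {x : α → ℝ} {y : β → ℝ} (hx : x ∈ stdSimplex ℝ α) (hy : y ∈ stdSimplex ℝ β) :
    ∑ a, ∑ b, x a * M a b * y b ≤ (∑ a, ∑ b, x a * N a b * y b) + c := by
  have key : ∑ a, ∑ b, x a * M a b * y b
      ≤ ∑ a, ∑ b, (x a * N a b * y b + x a * c * y b) := by
    refine Finset.sum_le_sum fun a _ => Finset.sum_le_sum fun b _ => ?_
    have h1 : x a * M a b * y b ≤ x a * (N a b + c) * y b :=
      mul_le_mul_of_nonneg_right
        (mul_le_mul_of_nonneg_left (h a b) (hx.1 a)) (hy.1 b)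
    calc x a * M a b * y b ≤ x a * (N a b + c) * y b := h1
    _ = x a * N a b * y b + x a * c * y b := by ring
  calc ∑ a, ∑ b, x a * M a b * y b
      ≤ ∑ a, ∑ b, (x a * N a b * y b + x a * c * y b) := key
    _ = (∑ a, ∑ b, x a * N a b * y b) + ∑ a, ∑ b, x a * c * y b := by
        rw [← Finset.sum_add_distrib]; exact Finset.sum_congr rfl fun a _ => Finset.sum_add_distrib
    _ = (∑ a, ∑ b, x a * N a b * y b) + c := by rw [sum_weight_const hx.2 hy.2]

lemma pay_le_const {M : α → β → ℝ} {c : ℝ} (h : ∀ a b, M a b ≤ c)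
    {x : α → ℝ} {y : β → ℝ} (hx : x ∈ stdSimplex ℝ α) (hy : y ∈ stdSimplex ℝ β) :
    ∑ a, ∑ b, x a * M a b * y b ≤ c := by
  have := pay_le_pay (M := M) (N := fun _ _ => 0) (c := c)
    (fun a b => by simpa using h a b) hx hy
  simpa using this

lemma const_le_pay {M : α → β → ℝ} {c : ℝ} (h : ∀ a b, c ≤ M a b)
    {x : α → ℝ} {y : β → ℝ} (hx : x ∈ stdSimplex ℝ α) (hy : y ∈ stdSimplex ℝ β) :
    c ≤ ∑ a, ∑ b, x a * M a b * y b := by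
  have := pay_le_pay (M := fun _ _ => (0:ℝ)) (N := M) (c := -c)
    (fun a b => by have := h a b; show (0:ℝ) ≤ M a b + -c; linarith) hx hy
  simp only [zero_mul, mul_zero, Finset.sum_const_zero] at this
  linarith

variable [Nonempty α] [Nonempty β]

lemma stdSimplex_nonempty' : Nonempty (stdSimplex ℝ α) := by
  classical
  exact ⟨⟨_, ite_eq_mem_stdSimplex ℝ (Classical.arbitrary α)⟩⟩

lemma matVal_le_add (M N : α → β → ℝ) (c : ℝ) (h : ∀ a b, M a b ≤ N a b + c) :
    matVal M ≤ matVal N + c := by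
  classical
  haveI hSA : Nonempty (stdSimplex ℝ α) := stdSimplex_nonempty'
  haveI hSB : Nonempty (stdSimplex ℝ β) := stdSimplex_nonempty'
  obtain ⟨CM, hCM⟩ : ∃ C, ∀ a b, |M a b| ≤ C :=
    ⟨Finset.univ.sup' Finset.univ_nonempty (fun p : α × β => |M p.1 p.2|),
      fun a b => Finset.le_sup' (f := fun p : α × β => |M p.1 p.2|) (Finset.mem_univ (a, b))⟩
  obtain ⟨CN, hCN⟩ : ∃ C, ∀ a b, |N a b| ≤ C :=
    ⟨Finset.univ.sup' Finset.univ_nonempty (fun p : α × β => |N p.1 p.2|),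
      fun a b => Finset.le_sup' (f := fun p : α × β => |N p.1 p.2|) (Finset.mem_univ (a, b))⟩
  have bddM : ∀ x : stdSimplex ℝ α,
      BddBelow (range fun y : stdSimplex ℝ β => ∑ a, ∑ b, x.1 a * M a b * y.1 b) := by
    intro x
    refine ⟨-CM, fun v hv => ?_⟩
    obtain ⟨y, rfl⟩ := hv
    exact const_le_pay (fun a b => neg_le_of_abs_le (hCM a b)) x.2 y.2
  have bddN : BddAbove (range fun x : stdSimplex ℝ α =>
      ⨅ y : stdSimplex ℝ β, ∑ a, ∑ b, x.1 a * N a b * y.1 b) := by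
    refine ⟨CN, fun v hv => ?_⟩
    obtain ⟨x, rfl⟩ := hv
    obtain ⟨y⟩ := hSB
    exact le_trans (ciInf_le ⟨-CN, fun v hv => by
      obtain ⟨y', rfl⟩ := hv
      exact const_le_pay (fun a b => neg_le_of_abs_le (hCN a b)) x.2 y'.2⟩ y)
      (pay_le_const (fun a b => le_of_abs_le (hCN a b)) x.2 y.2)
  refine ciSup_le fun x => ?_
  have step : (⨅ y : stdSimplex ℝ β, ∑ a, ∑ b, x.1 a * M a b * y.1 b)
      ≤ (⨅ y : stdSimplex ℝ β, ∑ a, ∑ b, x.1 a * N a b * y.1 b) + c := by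
    have : (⨅ y : stdSimplex ℝ β, ∑ a, ∑ b, x.1 a * M a b * y.1 b) - c
        ≤ ⨅ y : stdSimplex ℝ β, ∑ a, ∑ b, x.1 a * N a b * y.1 b := by
      refine le_ciInf fun y => ?_
      have h1 := ciInf_le (bddM x) y
      have h2 := pay_le_pay h x.2 y.2
      linarith
    linarith
  have := le_ciSup bddN x
  calc (⨅ y : stdSimplex ℝ β, ∑ a, ∑ b, x.1 a * M a b * y.1 b)
      ≤ (⨅ y : stdSimplex ℝ β, ∑ a, ∑ b, x.1 a * N a b * y.1 b) + c := step
    _ ≤ matVal N + c := by unfold matVal; linarith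

end MatValLemmas

section DetLemmas
variable {n : ℕ}

lemma det_one_sub_smul_pos (Q : Matrix (Fin n) (Fin n) ℝ)
    (hQ0 : ∀ i j, 0 ≤ Q i j) (hQ1 : ∀ i, ∑ j, Q i j = 1)
    {t : ℝ} (ht : t ∈ Set.Ico (0:ℝ) 1) :
    0 < Matrix.det (1 - t • Q) := by
  have hcont : Continuous fun s : ℝ => Matrix.det (1 - s • Q) := by
    refine Continuous.matrix_det (continuous_matrix fun i j => ?_)
    simp only [Matrix.sub_apply, Matrix.smul_apply, Matrix.one_apply, smul_eq_mul]
    fun_prop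
  have hne : ∀ s ∈ Set.Ico (0:ℝ) 1, Matrix.det (1 - s • Q) ≠ 0 := by
    intro s hs
    apply det_ne_zero_of_sum_row_lt_diag
    intro i
    have hdiag : Q i i ≤ 1 := by
      rw [← hQ1 i]
      exact Finset.single_le_sum (fun j _ => hQ0 i j) (Finset.mem_univ i)
    have hrow : ∑ j ∈ Finset.univ.erase i, Q i j = 1 - Q i i := by
      rw [← hQ1 i]
      exact Finset.sum_erase_eq_sub (Finset.mem_univ i)
    have he : ∀ j ∈ Finset.univ.erase i, ‖(1 - s • Q) i j‖ = s * Q i j := by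
      intro j hj
      have hij : j ≠ i := (Finset.mem_erase.1 hj).1
      simp only [Matrix.sub_apply, Matrix.smul_apply, Matrix.one_apply, smul_eq_mul,
        if_neg (Ne.symm hij), zero_sub, norm_neg, Real.norm_eq_abs]
      exact abs_of_nonneg (mul_nonneg hs.1 (hQ0 i j))
    rw [Finset.sum_congr rfl he]
    have hd : ‖(1 - s • Q) i i‖ = 1 - s * Q i i := by
      simp only [Matrix.sub_apply, Matrix.smul_apply, Matrix.one_apply_eq,
        smul_eq_mul, Real.norm_eq_abs]
      refine abs_of_pos ?_
      nlinarith [hs.1, hs.2, hQ0 i i]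
    rw [hd, ← Finset.mul_sum, hrow]
    nlinarith [hs.1, hs.2, hQ0 i i]
  by_contra hle
  push_neg at hle
  have h0 : Matrix.det (1 - (0:ℝ) • Q) = 1 := by simp
  have := intermediate_value_Icc' ht.1 (hcont.continuousOn (s := Set.Icc 0 t))
  have h0mem : (0:ℝ) ∈ Set.Icc (Matrix.det (1 - t • Q)) (Matrix.det (1 - (0:ℝ) • Q)) := by
    rw [h0]; exact ⟨hle, zero_le_one⟩
  obtain ⟨c, hc, hc0⟩ := this h0mem
  exact hne c ⟨hc.1, lt_of_le_of_lt hc.2 ht.2⟩ hc0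

lemma exists_poly_det (Q : Matrix (Fin n) (Fin n) ℝ) :
    ∃ p : Polynomial ℝ, p.natDegree ≤ n ∧
      ∀ t : ℝ, p.eval t = Matrix.det (1 - (1 - t) • Q) := by
  classical
  set P : Matrix (Fin n) (Fin n) ℝ[X] :=
    Matrix.of (fun i j => (if i = j then 1 else 0) - (1 - X) * C (Q i j)) with hP
  refine ⟨P.det, ?_, ?_⟩
  · rw [Matrix.det_apply]
    refine natDegree_sum_le_of_forall_le _ _ fun σ _ => ?_
    have h1 : ∀ z : ℝ[X], (Equiv.Perm.sign σ • z).natDegree ≤ z.natDegree := by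
      intro z
      rcases Int.units_eq_one_or (Equiv.Perm.sign σ) with h | h <;>
        simp [h, Units.smul_def]
    refine (h1 _).trans ((natDegree_prod_le _ _).trans ?_)
    have h2 : ∀ i : Fin n, (P (σ i) i).natDegree ≤ 1 := by
      intro i
      simp only [hP, Matrix.of_apply]
      refine (natDegree_sub_le _ _).trans ?_
      have ha : ((if σ i = i then (1:ℝ[X]) else 0)).natDegree = 0 := by
        split_ifs <;> simp
      have hb : ((1 - X) * C (Q (σ i) i)).natDegree ≤ 1 := by
        refine (natDegree_mul_le).trans ?_
        have : (1 - X : ℝ[X]).natDegree ≤ 1 :=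
          (natDegree_sub_le _ _).trans (by simp)
        simpa using this
      simp [ha, hb]
    calc ∑ i, (P (σ i) i).natDegree ≤ ∑ _i : Fin n, 1 := Finset.sum_le_sum fun i _ => h2 i
      _ = n := by simp
  · intro t
    have hdet := RingHom.map_det (Polynomial.evalRingHom t) P
    rw [show eval t P.det = (Polynomial.evalRingHom t) P.det from rfl, hdet,
      RingHom.mapMatrix_apply]
    congr 1
    ext i j
    simp only [Matrix.map_apply, hP, Matrix.of_apply,
      Matrix.sub_apply, Matrix.smul_apply, Matrix.one_apply, smul_eq_mul]
    split_ifs <;> simp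

lemma poly_pos_eventually {p : Polynomial ℝ} {n : ℕ} (hd : p.natDegree ≤ n)
    (hp : ∀ t ∈ Set.Ioc (0:ℝ) 1, 0 < p.eval t) :
    ∃ c > 0, ∀ᶠ t in 𝓝[>] (0:ℝ), c ≤ (t ^ n)⁻¹ * p.eval t := by
  have hp0 : p ≠ 0 := fun h => by
    have := hp 1 ⟨zero_lt_one, le_refl 1⟩; simp [h] at this
  set m := p.rootMultiplicity 0 with hm
  set r := p /ₘ (X - C 0) ^ m with hr
  have key : ∀ t : ℝ, p.eval t = t ^ m * r.eval t := by
    intro t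
    conv_lhs => rw [← pow_mul_divByMonic_rootMultiplicity_eq p 0]
    simp [hr, hm]
  have hr0 : r.eval 0 ≠ 0 := eval_divByMonic_pow_rootMultiplicity_ne_zero 0 hp0
  have hrpos : ∀ t ∈ Set.Ioc (0:ℝ) 1, 0 < r.eval t := by
    intro t ht
    have h1 := hp t ht
    rw [key t] at h1
    have h2 : (0:ℝ) < t ^ m := pow_pos ht.1 m
    by_contra hle
    push_neg at hle
    have := mul_nonpos_iff.2 (Or.inr ⟨hle, h2.le⟩)
    nlinarith
  have hten : Tendsto (fun t => r.eval t) (𝓝[>] (0:ℝ)) (𝓝 (r.eval 0)) :=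
    ((r.continuous_aeval).tendsto 0).mono_left nhdsWithin_le_nhds
  have hIoc : Set.Ioc (0:ℝ) 1 ∈ 𝓝[>] (0:ℝ) :=
    Ioc_mem_nhdsGT_of_mem ⟨le_refl 0, zero_lt_one⟩
  have h0le : 0 ≤ r.eval 0 := by
    refine ge_of_tendsto hten ?_
    filter_upwards [hIoc] with t ht using (hrpos t ht).le
  have h0pos : 0 < r.eval 0 := h0le.lt_of_ne (Ne.symm hr0)
  set c := r.eval 0 / 2 with hc
  have hcpos : 0 < c := by positivity
  have hnear : ∀ᶠ t in 𝓝[>] (0:ℝ), c < r.eval t := by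
    have hmem : Set.Ioi c ∈ 𝓝 (r.eval 0) := isOpen_Ioi.mem_nhds (Set.mem_Ioi.2 (by rw [hc]; linarith))
    exact hten.eventually_mem hmem
  have hmn : m ≤ n := by
    have hdvd := pow_rootMultiplicity_dvd p (0:ℝ)
    have h1 := Polynomial.natDegree_le_of_dvd hdvd hp0
    rw [map_zero, sub_zero, natDegree_X_pow] at h1
    exact h1.trans hd
  refine ⟨c, hcpos, ?_⟩
  filter_upwards [hnear, hIoc] with t ht1 ht2
  rw [key t]
  have htn : (0:ℝ) < t ^ n := pow_pos ht2.1 n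
  have h1 : t ^ n ≤ t ^ m := pow_le_pow_of_le_one ht2.1.le ht2.2 hmn
  have h2 : (1:ℝ) ≤ (t ^ n)⁻¹ * t ^ m := by
    rw [le_inv_mul_iff₀ htn]; simpa using h1
  have hrt : 0 < r.eval t := hrpos t ht2
  have h3 : r.eval t ≤ ((t ^ n)⁻¹ * t ^ m) * r.eval t := le_mul_of_one_le_left hrt.le h2
  calc c ≤ r.eval t := ht1.le
    _ ≤ ((t ^ n)⁻¹ * t ^ m) * r.eval t := h3
    _ = (t ^ n)⁻¹ * (t ^ m * r.eval t) := by ring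

end DetLemmas

end AuxLemmas

/-- For fixed λ ∈ (0,1], z ↦ val W^k_λ(z) is continuous and strictly decreasing.
Moreover, whenever the limits F^k(z) = lim_{λ→0⁺} λ^{−n}·val W^k_λ(z) exist in ℝ∪{±∞},
z ↦ F^k(z) is non-increasing, and strictly decreasing where finite. -/
theorem stmt17
    {n : ℕ} (hn : 1 ≤ n)
    {A B : Fin n → Type*} [∀ k, Fintype (A k)] [∀ k, Fintype (B k)]
    [∀ k, Nonempty (A k)] [∀ k, Nonempty (B k)]
    (g : (k : Fin n) → A k → B k → ℝ)
    (q : (k : Fin n) → A k → B k → Fin n → ℝ)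
    (hq0 : ∀ k i j l, 0 ≤ q k i j l)
    (hq1 : ∀ k i j, ∑ l, q k i j l = 1)
    (k : Fin n)
    (lam : ℝ) (hlam : lam ∈ Set.Ioc (0:ℝ) 1) :
    Continuous (fun z : ℝ => matVal (Wmat g q k lam z)) ∧
    StrictAnti (fun z : ℝ => matVal (Wmat g q k lam z)) ∧
    ∀ F : ℝ → EReal,
      (∀ z : ℝ,
        Tendsto (fun mu : ℝ => (((mu ^ n)⁻¹ * matVal (Wmat g q k mu z) : ℝ) : EReal))
          (𝓝[>] (0:ℝ)) (𝓝 (F z))) →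
      (∀ z₁ z₂ : ℝ, z₁ ≤ z₂ → F z₂ ≤ F z₁) ∧
      (∀ z₁ z₂ : ℝ, z₁ < z₂ →
        F z₁ ≠ ⊤ → F z₁ ≠ ⊥ → F z₂ ≠ ⊤ → F z₂ ≠ ⊥ → F z₂ < F z₁) := by
  
  classical
  have pairne : (Finset.univ : Finset (((k : Fin n) → A k) × ((k : Fin n) → B k))).Nonempty :=
    Finset.univ_nonempty
  -- positivity of dZero
  have hd0pos : ∀ mu : ℝ, mu ∈ Set.Ioc (0:ℝ) 1 → ∀ ii jj, 0 < dZero q ii jj mu := by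
    intro mu hmu ii jj
    have := det_one_sub_smul_pos (Matrix.of (fun l l' => q l (ii l) (jj l) l'))
      (fun i j => hq0 _ _ _ _) (fun i => hq1 _ _ _) (t := 1 - mu)
      ⟨by linarith [hmu.2], by linarith [hmu.1]⟩
    simpa [dZero] using this
  -- main quantitative inequality
  have keyle : ∀ (mu z₁ z₂ m : ℝ), z₁ ≤ z₂ → (∀ ii jj, m ≤ dZero q ii jj mu) →
      matVal (Wmat g q k mu z₂) ≤ matVal (Wmat g q k mu z₁) - (z₂ - z₁) * m := by
    intro mu z₁ z₂ m hz hm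
    have h := matVal_le_add (Wmat g q k mu z₂) (Wmat g q k mu z₁) (-((z₂ - z₁) * m))
      (by
        intro ii jj
        simp only [Wmat]
        have h1 := hm ii jj
        nlinarith)
    linarith
  refine ⟨?_, ?_, ?_⟩
  · -- continuity
    set D := Finset.univ.sup' pairne
      (fun p : ((k : Fin n) → A k) × ((k : Fin n) → B k) => |dZero q p.1 p.2 lam|) with hD
    have hDle : ∀ ii jj, |dZero q ii jj lam| ≤ D := fun ii jj =>
      Finset.le_sup' (f := fun p : ((k : Fin n) → A k) × ((k : Fin n) → B k) =>
        |dZero q p.1 p.2 lam|) (Finset.mem_univ (ii, jj))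
    have hD0 : 0 ≤ D := by
      obtain ⟨p⟩ := (inferInstance : Nonempty ((((k : Fin n) → A k)) × ((k : Fin n) → B k)))
      exact (abs_nonneg _).trans (hDle p.1 p.2)
    have key2 : ∀ u v : ℝ, matVal (Wmat g q k lam u) ≤ matVal (Wmat g q k lam v) + |u - v| * D := by
      intro u v
      refine matVal_le_add _ _ _ fun ii jj => ?_
      simp only [Wmat]
      have h1 := hDle ii jj
      have h2 : (v - u) * dZero q ii jj lam ≤ |u - v| * D := by
        calc (v - u) * dZero q ii jj lam ≤ |(v - u) * dZero q ii jj lam| := le_abs_self _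
          _ = |v - u| * |dZero q ii jj lam| := abs_mul _ _
          _ = |u - v| * |dZero q ii jj lam| := by rw [abs_sub_comm]
          _ ≤ |u - v| * D := mul_le_mul_of_nonneg_left h1 (abs_nonneg _)
      linarith
    refine (LipschitzWith.of_dist_le_mul (K := Real.toNNReal D)
      (f := fun z : ℝ => matVal (Wmat g q k lam z)) ?_).continuous
    intro z z'
    rw [Real.dist_eq, Real.dist_eq, Real.coe_toNNReal D hD0]
    rw [abs_sub_le_iff]
    constructor
    · have := key2 z z'; linarith
    · have := key2 z' z; rw [abs_sub_comm] at this; linarith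
  · -- strict antitonicity
    intro z₁ z₂ hz
    set m := Finset.univ.inf' pairne
      (fun p : ((k : Fin n) → A k) × ((k : Fin n) → B k) => dZero q p.1 p.2 lam) with hm
    have hmle : ∀ ii jj, m ≤ dZero q ii jj lam := fun ii jj =>
      Finset.inf'_le (f := fun p : ((k : Fin n) → A k) × ((k : Fin n) → B k) =>
        dZero q p.1 p.2 lam) (Finset.mem_univ (ii, jj))
    have hmpos : 0 < m := by
      rw [hm, Finset.lt_inf'_iff]
      exact fun p _ => hd0pos lam hlam p.1 p.2
    have h := keyle lam z₁ z₂ m hz.le hmle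
    have : 0 < (z₂ - z₁) * m := mul_pos (by linarith) hmpos
    simp only
    linarith
  · -- the limit part
    intro F hF
    have hIoc : Set.Ioc (0:ℝ) 1 ∈ 𝓝[>] (0:ℝ) :=
      Ioc_mem_nhdsGT_of_mem ⟨le_refl 0, zero_lt_one⟩
    constructor
    · intro z₁ z₂ hz
      have hev : ∀ᶠ mu in 𝓝[>] (0:ℝ),
          (((mu ^ n)⁻¹ * matVal (Wmat g q k mu z₂) : ℝ) : EReal)
            ≤ (((mu ^ n)⁻¹ * matVal (Wmat g q k mu z₁) : ℝ) : EReal) := by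
        filter_upwards [hIoc] with mu hmu
        have h1 := keyle mu z₁ z₂ 0 hz (fun ii jj => (hd0pos mu hmu ii jj).le)
        have h2 : (0:ℝ) ≤ (mu ^ n)⁻¹ := inv_nonneg.2 (pow_nonneg hmu.1.le n)
        exact EReal.coe_le_coe_iff.2
          (mul_le_mul_of_nonneg_left (by linarith) h2)
      exact le_of_tendsto_of_tendsto (hF z₂) (hF z₁) hev
    · intro z₁ z₂ hz h1t h1b h2t h2b
      -- choose eventual lower bounds for each pair
      have hall : ∀ p : ((k : Fin n) → A k) × ((k : Fin n) → B k),
          ∃ c > 0, ∀ᶠ mu in 𝓝[>] (0:ℝ), c ≤ (mu ^ n)⁻¹ * dZero q p.1 p.2 mu := by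
        intro p
        obtain ⟨pol, hdeg, heval⟩ :=
          exists_poly_det (Matrix.of fun l l' => q l (p.1 l) (p.2 l) l')
        have hpos : ∀ t ∈ Set.Ioc (0:ℝ) 1, 0 < pol.eval t := by
          intro t ht
          rw [heval]
          exact hd0pos t ht p.1 p.2
        obtain ⟨c, hc, hev⟩ := poly_pos_eventually hdeg hpos
        refine ⟨c, hc, hev.mono fun mu h => ?_⟩
        have : dZero q p.1 p.2 mu = pol.eval mu := (heval mu).symm
        rw [this]
        exact h
      choose cf hcf hevf using hall
      set c := Finset.univ.inf' pairne cf with hc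
      have hcpos : 0 < c := by
        rw [hc, Finset.lt_inf'_iff]
        exact fun p _ => hcf p
      have hev : ∀ᶠ mu in 𝓝[>] (0:ℝ),
          ((mu ^ n)⁻¹ * matVal (Wmat g q k mu z₂)) + (z₂ - z₁) * c
            ≤ (mu ^ n)⁻¹ * matVal (Wmat g q k mu z₁) := by
        filter_upwards [Filter.eventually_all.2 hevf, hIoc] with mu hmu1 hmu2
        have hmun : (0:ℝ) < mu ^ n := pow_pos hmu2.1 n
        have hlow : ∀ ii jj, c * mu ^ n ≤ dZero q ii jj mu := by
          intro ii jj
          have h1 := hmu1 (ii, jj)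
          have h2 : c ≤ cf (ii, jj) := Finset.inf'_le _ (Finset.mem_univ _)
          have h3 := mul_le_mul_of_nonneg_right (h2.trans h1) hmun.le
          calc c * mu ^ n ≤ ((mu ^ n)⁻¹ * dZero q ii jj mu) * mu ^ n := h3
            _ = dZero q ii jj mu := by field_simp
        have h1 := keyle mu z₁ z₂ (c * mu ^ n) hz.le hlow
        have h2 := mul_le_mul_of_nonneg_left h1 (inv_nonneg.2 hmun.le)
        have h3 : (mu ^ n)⁻¹ * (matVal (Wmat g q k mu z₁) - (z₂ - z₁) * (c * mu ^ n))
            = (mu ^ n)⁻¹ * matVal (Wmat g q k mu z₁) - (z₂ - z₁) * c := by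
          field_simp
        rw [h3] at h2
        linarith
      set a₁ := (F z₁).toReal with ha₁
      set a₂ := (F z₂).toReal with ha₂
      have hF1 : F z₁ = (a₁ : EReal) := (EReal.coe_toReal h1t h1b).symm
      have hF2 : F z₂ = (a₂ : EReal) := (EReal.coe_toReal h2t h2b).symm
      have ht1 : Tendsto (fun mu : ℝ => (mu ^ n)⁻¹ * matVal (Wmat g q k mu z₁))
          (𝓝[>] (0:ℝ)) (𝓝 a₁) := EReal.tendsto_coe.1 (hF1 ▸ hF z₁)
      have ht2 : Tendsto (fun mu : ℝ => (mu ^ n)⁻¹ * matVal (Wmat g q k mu z₂))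
          (𝓝[>] (0:ℝ)) (𝓝 a₂) := EReal.tendsto_coe.1 (hF2 ▸ hF z₂)
      have hfin : a₂ + (z₂ - z₁) * c ≤ a₁ :=
        le_of_tendsto_of_tendsto (ht2.add_const _) ht1 hev
      have : a₂ < a₁ := by nlinarith
      rw [hF1, hF2]
      exact_mod_cast EReal.coe_lt_coe_iff.2 this
end
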